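/- arXiv:2302.06878 — 8 statements merged into one kernel-verified Lean document; each statement's English description precedes it below -/
import Mathlib

section
/- Let H be a finite simple graph on n vertices with maximum degree at most Δ, where 8 ≤ Δ ≤ n, and set t := log n / log Δ (so Δ^t = n). Let s ≥ 1 be an integer and c ≥ 8 a real number. Let B be a random subset of the vertex set of H such that for every 5-independent vertex set U of H, P(U ⊆ B) ≤ Δ^{−(s+c)·|U|}. Then: (P1) the probability that there exists a vertex set U ⊆ B that is 5-independent in H, (s+8)-connected in H, and satisfies |U| ≥ t is at most n^{11−c}; and (P2) the probability that there exists an s-connected vertex set C ⊆ B with |C| ≥ t·(1+Δ+Δ²+Δ³+Δ⁴) is at most n^{11−c}. -/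
open scoped ENNReal
open MeasureTheory
open scoped ProbabilityTheory

/-- `sdist G A B` is the minimum shortest-path distance (in `ℕ∞`) between the
vertex sets `A` and `B` in the graph `G`. -/
noncomputable def sdist {V : Type*} (G : SimpleGraph V) (A B : Set V) : ℕ∞ :=
  ⨅ a ∈ A, ⨅ b ∈ B, G.edist a b

/-- A vertex set `S` is `s`-connected in `G` if every nonempty proper subset `S' ⊊ S`
satisfies `dist_G(S', S \ S') ≤ s`. -/
def sConnected {V : Type*} (G : SimpleGraph V) (s : ℕ) (S : Set V) : Prop :=
  ∀ S' ⊆ S, S'.Nonempty → S' ≠ S → sdist G S' (S \ S') ≤ (s : ℕ∞)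

/-- A vertex set `S` is `α`-independent in `G` if any two distinct vertices of `S`
are at distance at least `α` in `G`. -/
def Indep {V : Type*} (G : SimpleGraph V) (α : ℕ) (S : Set V) : Prop :=
  ∀ u ∈ S, ∀ v ∈ S, u ≠ v → (α : ℕ∞) ≤ G.edist u v

namespace Shat

open SimpleGraph Finset

variable {V : Type*}

lemma sdist_le_of_mem {G : SimpleGraph V} {A B : Set V} {a b : V} (ha : a ∈ A) (hb : b ∈ B) :
    sdist G A B ≤ G.edist a b :=
  le_trans (iInf₂_le a ha) (iInf₂_le b hb)

lemma exists_edist_le_of_sdist_le {G : SimpleGraph V} {A B : Set V} {k : ℕ}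
    (h : sdist G A B ≤ (k : ℕ∞)) : ∃ a ∈ A, ∃ b ∈ B, G.edist a b ≤ (k : ℕ∞) := by
  by_contra hcon
  push_neg at hcon
  have h1 : (k : ℕ∞) + 1 ≤ sdist G A B := by
    refine le_iInf₂ fun a ha => le_iInf₂ fun b hb => ?_
    exact Order.add_one_le_of_lt (hcon a ha b hb)
  have h4 : (k : ℕ∞) + 1 ≤ (k : ℕ∞) := h1.trans h
  have : (k : ℕ) + 1 ≤ k := by exact_mod_cast h4
  omega

/-- auxiliary distance-`α` graph -/
def aux (H : SimpleGraph V) (α : ℕ) : SimpleGraph V where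
  Adj x y := x ≠ y ∧ H.edist x y ≤ (α : ℕ∞)
  symm := by
    constructor
    intro x y h
    exact ⟨h.1.symm, by rw [H.edist_comm]; exact h.2⟩
  loopless := by constructor; intro x h; exact h.1 rfl

/-- connectivity-within-a-finset via walks -/
def Gconn (G : SimpleGraph V) (S : Finset V) : Prop :=
  ∀ u ∈ S, ∀ w ∈ S, ∃ p : G.Walk u w, ∀ x ∈ p.support, x ∈ S

lemma Gconn.insert_adj [DecidableEq V] {G : SimpleGraph V} {S : Finset V} {x y : V}
    (h : Gconn G S) (hx : x ∈ S) (hadj : G.Adj x y) : Gconn G (insert y S) := by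
  -- helper : walk from any u ∈ insert y S to x with support in insert y S
  have key : ∀ u ∈ insert y S, ∃ p : G.Walk u x, ∀ z ∈ p.support, z ∈ insert y S := by
    intro u hu
    rcases Finset.mem_insert.mp hu with rfl | hu
    · exact ⟨SimpleGraph.Walk.cons hadj.symm SimpleGraph.Walk.nil, by
        intro z hz
        simp only [SimpleGraph.Walk.support_cons, SimpleGraph.Walk.support_nil,
          List.mem_cons, List.mem_singleton] at hz
        rcases hz with rfl | rfl | h'
        · exact Finset.mem_insert_self _ _
        · exact Finset.mem_insert_of_mem hx
        · cases h'⟩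
    · obtain ⟨p, hp⟩ := h u hu x hx
      exact ⟨p, fun z hz => Finset.mem_insert_of_mem (hp z hz)⟩
  intro u hu w hw
  obtain ⟨p, hp⟩ := key u hu
  obtain ⟨q, hq⟩ := key w hw
  refine ⟨p.append q.reverse, ?_⟩
  intro z hz
  rw [SimpleGraph.Walk.mem_support_append_iff] at hz
  rcases hz with hz | hz
  · exact hp z hz
  · exact hq z (by rwa [SimpleGraph.Walk.support_reverse, List.mem_reverse] at hz)

lemma cross_of_walk {G : SimpleGraph V} {S A : Finset V} :
    ∀ {u w : V} (p : G.Walk u w), u ∈ A → w ∉ A → (∀ z ∈ p.support, z ∈ S) →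
      ∃ x ∈ A, ∃ y ∈ S, y ∉ A ∧ G.Adj x y := by
  intro u w p
  induction p with
  | nil => intro hu hw _; exact absurd hu hw
  | cons hadj q ih =>
    intro hu hw hsupp
    rename_i a b c
    by_cases hb : b ∈ A
    · exact ih hb hw (fun z hz => hsupp z (by simp [SimpleGraph.Walk.support_cons, hz]))
    · exact ⟨a, hu, b, hsupp b (by simp [SimpleGraph.Walk.support_cons]), hb, hadj⟩

lemma Gconn.cross {G : SimpleGraph V} {S A : Finset V} (h : Gconn G S) (hA : A ⊆ S)
    (hne : A.Nonempty) (hpr : A ≠ S) : ∃ x ∈ A, ∃ y ∈ S, y ∉ A ∧ G.Adj x y := by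
  obtain ⟨u, hu⟩ := hne
  obtain ⟨w, hwS, hwA⟩ := Finset.exists_of_ssubset (lt_of_le_of_ne hA hpr)
  obtain ⟨p, hp⟩ := h u (hA hu) w hwS
  exact cross_of_walk p hu hwA hp

lemma exists_conn_subset [DecidableEq V] {G : SimpleGraph V} {S : Finset V} {v : V}
    (h : Gconn G S) (hv : v ∈ S) :
    ∀ m : ℕ, 1 ≤ m → m ≤ S.card → ∃ S' ⊆ S, v ∈ S' ∧ Gconn G S' ∧ S'.card = m := by
  intro m
  induction m with
  | zero => intro h1; omega
  | succ m ih =>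
    intro _ hm
    by_cases hm1 : m = 0
    · subst hm1
      refine ⟨{v}, Finset.singleton_subset_iff.mpr hv, Finset.mem_singleton_self v, ?_, by simp⟩
      intro u hu w hw
      rw [Finset.mem_singleton] at hu hw
      subst hu; subst hw
      exact ⟨SimpleGraph.Walk.nil, by simp⟩
    · obtain ⟨S', hS'sub, hvS', hS'conn, hS'card⟩ := ih (by omega) (by omega)
      have hne : S' ≠ S := by
        intro hh; rw [hh] at hS'card; omega
      obtain ⟨x, hxS', y, hyS, hyS', hadj⟩ := h.cross hS'sub ⟨v, hvS'⟩ hne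
      refine ⟨insert y S', Finset.insert_subset hyS hS'sub,
        Finset.mem_insert_of_mem hvS', hS'conn.insert_adj hxS' hadj, ?_⟩
      rw [Finset.card_insert_of_notMem hyS', hS'card]

lemma gconn_of_sConnected {H : SimpleGraph V} {α : ℕ} {S : Finset V}
    (h : sConnected H α (S : Set V)) : Gconn (aux H α) S := by
  classical
  intro u hu w hw
  set G' := aux H α
  set R : Finset V := S.filter (fun z => ∃ p : G'.Walk u z, ∀ x ∈ p.support, x ∈ S) with hR
  have hmemR : ∀ z, z ∈ R ↔ z ∈ S ∧ ∃ p : G'.Walk u z, ∀ x ∈ p.support, x ∈ S := by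
    intro z; simp [hR]
  have huR : u ∈ R := (hmemR u).mpr ⟨hu, SimpleGraph.Walk.nil, by simpa using hu⟩
  have hRS : R ⊆ S := Finset.filter_subset _ _
  have hReq : R = S := by
    by_contra hne
    have hcoe : (R : Set V) ≠ (S : Set V) := fun hh => hne (Finset.coe_injective hh)
    have hd := h (R : Set V) (Finset.coe_subset.mpr hRS) ⟨u, huR⟩ hcoe
    obtain ⟨a, ha, b, hb, hab⟩ := exists_edist_le_of_sdist_le hd
    have haR : a ∈ R := ha
    have hbS : b ∈ S := hb.1
    have hbR : b ∉ R := by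
      intro hh
      exact hb.2 hh
    have hneq : a ≠ b := by rintro rfl; exact hbR haR
    have hadj : G'.Adj a b := ⟨hneq, hab⟩
    obtain ⟨_, p, hp⟩ := (hmemR a).mp haR
    have : b ∈ R := (hmemR b).mpr ⟨hbS, p.append (SimpleGraph.Walk.cons hadj SimpleGraph.Walk.nil), by
      intro z hz
      rw [SimpleGraph.Walk.mem_support_append_iff] at hz
      rcases hz with hz | hz
      · exact hp z hz
      · simp only [SimpleGraph.Walk.support_cons, SimpleGraph.Walk.support_nil,
          List.mem_cons, List.mem_singleton] at hz
        rcases hz with rfl | rfl | h'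
        · exact hRS haR
        · exact hbS
        · cases h'⟩
    exact hbR this
  have hwR : w ∈ R := hReq ▸ hw
  obtain ⟨_, p, hp⟩ := (hmemR w).mp hwR
  exact ⟨p, hp⟩


section Ball
variable [Fintype V] [DecidableEq V]


noncomputable def ball (H : SimpleGraph V) (u : V) (r : ℕ) : Finset V :=
  univ.filter (fun x => H.edist u x ≤ (r : ℕ∞))

noncomputable def sph (H : SimpleGraph V) (u : V) (i : ℕ) : Finset V :=
  univ.filter (fun x => H.edist u x = (i : ℕ∞))

lemma exists_pred_of_edist_succ {H : SimpleGraph V} {u x : V} {i : ℕ}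
    (h : H.edist u x = ((i + 1 : ℕ) : ℕ∞)) : ∃ y, H.edist u y = (i : ℕ∞) ∧ H.Adj y x := by
  obtain ⟨p, hp⟩ := H.exists_walk_of_edist_eq_coe h
  have hlen : p.length = i + 1 := hp
  have hnotnil : ¬ p.reverse.Nil := by
    rw [SimpleGraph.Walk.nil_iff_length_eq, SimpleGraph.Walk.length_reverse]
    omega
  obtain ⟨y, hadj, q, hq⟩ := SimpleGraph.Walk.not_nil_iff.mp hnotnil
  -- hadj : H.Adj x y, q : Walk y u
  have hqlen : q.length = i := by
    have := congrArg SimpleGraph.Walk.length hq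
    rw [SimpleGraph.Walk.length_reverse, SimpleGraph.Walk.length_cons, hlen] at this
    omega
  have h1 : H.edist u y ≤ (i : ℕ∞) := by
    rw [H.edist_comm]
    calc H.edist y u ≤ q.length := SimpleGraph.edist_le q
    _ = (i : ℕ∞) := by exact_mod_cast hqlen
  have h2 : ((i : ℕ) : ℕ∞) + 1 ≤ H.edist u y + 1 := by
    have htri : H.edist u x ≤ H.edist u y + H.edist y x := H.edist_triangle
    have hyx : H.edist y x ≤ 1 := by
      rw [H.edist_comm]
      calc H.edist x y ≤ (hadj.toWalk).length := SimpleGraph.edist_le hadj.toWalk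
      _ = 1 := by simp
    calc ((i:ℕ):ℕ∞) + 1 = H.edist u x := by rw [h]; push_cast; ring
    _ ≤ H.edist u y + H.edist y x := htri
    _ ≤ H.edist u y + 1 := add_le_add_right hyx _
  have hne : H.edist u y ≠ ⊤ := ne_top_of_le_ne_top (by simp) h1
  lift H.edist u y to ℕ using hne with m hm
  have h1' : m ≤ i := by exact_mod_cast h1
  have h2' : i + 1 ≤ m + 1 := by exact_mod_cast h2
  have : m = i := by omega
  exact ⟨y, by rw [← hm, this], hadj.symm⟩

lemma sph_succ_subset {H : SimpleGraph V} [DecidableRel H.Adj] {u : V} {i : ℕ} :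
    sph H u (i + 1) ⊆ (sph H u i).biUnion (fun y => H.neighborFinset y) := by
  intro x hx
  rw [sph, mem_filter] at hx
  obtain ⟨y, hy, hadj⟩ := exists_pred_of_edist_succ (by exact_mod_cast hx.2)
  rw [mem_biUnion]
  exact ⟨y, by rw [sph, mem_filter]; exact ⟨mem_univ _, hy⟩, by rwa [mem_neighborFinset]⟩

lemma card_sph_le {H : SimpleGraph V} [DecidableRel H.Adj] {u : V} {Δ : ℕ}
    (hdeg : ∀ v : V, H.degree v ≤ Δ) : ∀ i : ℕ, (sph H u i).card ≤ Δ ^ i := by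
  intro i
  induction i with
  | zero =>
    have : sph H u 0 ⊆ {u} := by
      intro x hx
      rw [sph, mem_filter] at hx
      have : H.edist u x = 0 := by exact_mod_cast hx.2
      rw [SimpleGraph.edist_eq_zero_iff] at this
      simp [this]
    simpa using Finset.card_le_card this
  | succ i ih =>
    calc (sph H u (i+1)).card ≤ ((sph H u i).biUnion (fun y => H.neighborFinset y)).card :=
          Finset.card_le_card sph_succ_subset
    _ ≤ ∑ y ∈ sph H u i, (H.neighborFinset y).card := Finset.card_biUnion_le
    _ ≤ ∑ _y ∈ sph H u i, Δ := Finset.sum_le_sum (fun y _ => hdeg y)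
    _ = (sph H u i).card * Δ := by rw [Finset.sum_const, smul_eq_mul]
    _ ≤ Δ ^ i * Δ := Nat.mul_le_mul_right _ ih
    _ = Δ ^ (i+1) := by ring

lemma card_ball_le {H : SimpleGraph V} [DecidableRel H.Adj] {u : V} {Δ : ℕ}
    (hdeg : ∀ v : V, H.degree v ≤ Δ) (r : ℕ) :
    (ball H u r).card ≤ ∑ i ∈ Finset.range (r + 1), Δ ^ i := by
  have hsub : ball H u r ⊆ (Finset.range (r+1)).biUnion (fun i => sph H u i) := by
    intro x hx
    rw [ball, mem_filter] at hx
    have hne : H.edist u x ≠ ⊤ := ne_top_of_le_ne_top (by simp) hx.2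
    lift H.edist u x to ℕ using hne with m hm
    have : m ≤ r := by exact_mod_cast hx.2
    rw [mem_biUnion]
    exact ⟨m, Finset.mem_range.mpr (by omega), by rw [sph, mem_filter]; exact ⟨mem_univ _, hm.symm⟩⟩
  calc (ball H u r).card ≤ _ := Finset.card_le_card hsub
  _ ≤ ∑ i ∈ Finset.range (r+1), (sph H u i).card := Finset.card_biUnion_le
  _ ≤ ∑ i ∈ Finset.range (r+1), Δ ^ i := Finset.sum_le_sum (fun i _ => card_sph_le hdeg i)

lemma geom_le {Δ : ℕ} (hΔ : 2 ≤ Δ) : ∀ r : ℕ, ∑ i ∈ Finset.range (r + 1), Δ ^ i ≤ 2 * Δ ^ r := by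
  intro r
  induction r with
  | zero => simp
  | succ r ih =>
    rw [Finset.sum_range_succ]
    have : Δ ^ (r+1) = Δ * Δ ^ r := by ring
    calc ∑ i ∈ Finset.range (r+1), Δ^i + Δ^(r+1) ≤ 2 * Δ^r + Δ^(r+1) := by omega
    _ ≤ Δ * Δ^r + Δ^(r+1) := by
        have : 2 * Δ^r ≤ Δ * Δ^r := Nat.mul_le_mul_right _ hΔ
        omega
    _ = 2 * Δ^(r+1) := by ring



end Ball

section DFS
variable [LinearOrder V]

def pick (nb : V → Finset V) (A : Finset V) (x : V) (j : ℕ) : Option V :=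
  ((nb x \ A).sort (· ≤ ·))[j]?

def run (nb : V → Finset V) : List (Bool × ℕ) → List V → Finset V → Finset V
  | [], _, A => A
  | _ :: m, [], A => run nb m ([]) A
  | (false, _) :: m, _ :: st, A => run nb m st A
  | (true, j) :: m, x :: st, A =>
    match pick nb A x j with
    | none => run nb m (x :: st) A
    | some u => run nb m (u :: x :: st) (insert u A)

def dfsT (nb : V → Finset V) (S : Finset V) : ℕ → List V → Finset V → List (Bool × ℕ)
  | 0, _, _ => []
  | f+1, [], A => (false, 0) :: dfsT nb S f ([]) A
  | f+1, x :: st, A =>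
    if h : ((nb x \ A).filter (· ∈ S)).Nonempty then
      (true, ((nb x \ A).sort (· ≤ ·)).idxOf (((nb x \ A).filter (· ∈ S)).min' h))
        :: dfsT nb S f ((((nb x \ A).filter (· ∈ S)).min' h) :: x :: st)
             (insert (((nb x \ A).filter (· ∈ S)).min' h) A)
    else (false, 0) :: dfsT nb S f st A

def dfsA (nb : V → Finset V) (S : Finset V) : ℕ → List V → Finset V → Finset V
  | 0, _, A => A
  | f+1, [], A => dfsA nb S f ([]) A
  | f+1, x :: st, A =>
    if h : ((nb x \ A).filter (· ∈ S)).Nonempty then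
      dfsA nb S f ((((nb x \ A).filter (· ∈ S)).min' h) :: x :: st)
        (insert (((nb x \ A).filter (· ∈ S)).min' h) A)
    else dfsA nb S f st A

lemma dfsA_nil (nb : V → Finset V) (S : Finset V) : ∀ f A, dfsA nb S f ([]) A = A := by
  intro f
  induction f with
  | zero => intro A; rfl
  | succ f ih => intro A; rw [dfsA, ih]

lemma run_dfsT (nb : V → Finset V) (S : Finset V) :
    ∀ f st A, run nb (dfsT nb S f st A) st A = dfsA nb S f st A := by
  intro f
  induction f with
  | zero => intro st A; rfl
  | succ f ih =>
    intro st A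
    match st with
    | [] => rw [dfsT, dfsA, run, ih]
    | x :: st' =>
      rw [dfsT, dfsA]
      by_cases h : ((nb x \ A).filter (· ∈ S)).Nonempty
      · rw [dif_pos h, dif_pos h, run]
        set u := ((nb x \ A).filter (· ∈ S)).min' h with hu
        have humem : u ∈ nb x \ A := Finset.filter_subset _ _ (Finset.min'_mem _ h)
        have hsort : u ∈ (nb x \ A).sort (· ≤ ·) := (Finset.mem_sort _).mpr humem
        have hpick : pick nb A x (((nb x \ A).sort (· ≤ ·)).idxOf u) = some u := by
          rw [pick]
          exact List.getElem?_idxOf hsort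
        rw [hpick]
        exact ih _ _
      · rw [dif_neg h, dif_neg h, run]
        exact ih _ _

lemma dfsT_length (nb : V → Finset V) (S : Finset V) :
    ∀ f st A, (dfsT nb S f st A).length = f := by
  intro f
  induction f with
  | zero => intro st A; rfl
  | succ f ih =>
    intro st A
    match st with
    | [] => rw [dfsT]; simp [ih]
    | x :: st' =>
      rw [dfsT]
      by_cases h : ((nb x \ A).filter (· ∈ S)).Nonempty
      · rw [dif_pos h]; simp [ih]
      · rw [dif_neg h]; simp [ih]

lemma dfsT_countP (nb : V → Finset V) (S : Finset V) :
    ∀ f st A, A ⊆ S → (dfsT nb S f st A).countP (fun p => p.1) + A.card ≤ S.card := by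
  intro f
  induction f with
  | zero =>
    intro st A hsub
    simpa [dfsT] using Finset.card_le_card hsub
  | succ f ih =>
    intro st A hsub
    match st with
    | [] =>
      rw [dfsT]
      have := ih ([]) A hsub
      simpa using this
    | x :: st' =>
      rw [dfsT]
      by_cases h : ((nb x \ A).filter (· ∈ S)).Nonempty
      · rw [dif_pos h]
        set u := ((nb x \ A).filter (· ∈ S)).min' h with hu
        have humem := Finset.min'_mem _ h
        rw [Finset.mem_filter, Finset.mem_sdiff] at humem
        have hins : insert u A ⊆ S := Finset.insert_subset humem.2 hsub
        have := ih (u :: x :: st') (insert u A) hins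
        rw [Finset.card_insert_of_notMem humem.1.2] at this
        rw [List.countP_cons]
        simp only [Bool.if_true_left]
        simp
        omega
      · rw [dif_neg h]
        have := ih st' A hsub
        rw [List.countP_cons]
        simp
        omega

lemma dfsT_entries (nb : V → Finset V) (S : Finset V) (D : ℕ) (hD : ∀ x, (nb x).card ≤ D)
    (hD0 : 0 < D) :
    ∀ f st A, ∀ p ∈ dfsT nb S f st A, (p.1 = false → p.2 = 0) ∧ p.2 < D := by
  intro f
  induction f with
  | zero => intro st A p hp; simp [dfsT] at hp
  | succ f ih =>
    intro st A p hp
    match st with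
    | [] =>
      rw [dfsT] at hp
      rcases List.mem_cons.mp hp with rfl | hp
      · exact ⟨fun _ => rfl, hD0⟩
      · exact ih ([]) A p hp
    | x :: st' =>
      rw [dfsT] at hp
      by_cases h : ((nb x \ A).filter (· ∈ S)).Nonempty
      · rw [dif_pos h] at hp
        rcases List.mem_cons.mp hp with rfl | hp
        · constructor
          · intro hfalse; simp at hfalse
          · set u := ((nb x \ A).filter (· ∈ S)).min' h with hu
            have humem : u ∈ nb x \ A := Finset.filter_subset _ _ (Finset.min'_mem _ h)
            have hsort : u ∈ (nb x \ A).sort (· ≤ ·) := (Finset.mem_sort _).mpr humem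
            have hlt : ((nb x \ A).sort (· ≤ ·)).idxOf u < ((nb x \ A).sort (· ≤ ·)).length :=
              List.idxOf_lt_length_iff.mpr hsort
            rw [Finset.length_sort] at hlt
            calc ((nb x \ A).sort (· ≤ ·)).idxOf u < (nb x \ A).card := hlt
            _ ≤ (nb x).card := Finset.card_le_card (Finset.sdiff_subset)
            _ ≤ D := hD x
        · exact ih _ _ p hp
      · rw [dif_neg h] at hp
        rcases List.mem_cons.mp hp with rfl | hp
        · exact ⟨fun _ => rfl, hD0⟩
        · exact ih _ _ p hp

lemma dfsA_eq_of (nb : V → Finset V) (S : Finset V)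
    (hcross : ∀ A : Finset V, A ⊆ S → A.Nonempty → A ≠ S →
      ∃ x ∈ A, ∃ y ∈ S, y ∉ A ∧ y ∈ nb x) :
    ∀ f st A, (∀ x ∈ st, x ∈ A) → st.Nodup → A ⊆ S → A.Nonempty →
      (∀ x ∈ A, x ∉ st → ∀ y ∈ nb x, y ∈ S → y ∈ A) →
      2 * (S.card - A.card) + st.length ≤ f →
      dfsA nb S f st A = S := by
  have closed_eq : ∀ A : Finset V, A ⊆ S → A.Nonempty →
      (∀ x ∈ A, ∀ y ∈ nb x, y ∈ S → y ∈ A) → A = S := by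
    intro A hsub hne hclosed
    by_contra hAS
    obtain ⟨x, hx, y, hyS, hyA, hynb⟩ := hcross A hsub hne hAS
    exact hyA (hclosed x hx y hynb hyS)
  intro f
  induction f with
  | zero =>
    intro st A hst hnd hsub hne hclosed hmeas
    have hstnil : st = [] := List.length_eq_zero_iff.mp (by omega)
    subst hstnil
    rw [dfsA]
    exact closed_eq A hsub hne (fun x hx => hclosed x hx List.not_mem_nil)
  | succ f ih =>
    intro st A hst hnd hsub hne hclosed hmeas
    match st with
    | [] =>
      rw [dfsA, dfsA_nil]
      exact closed_eq A hsub hne (fun x hx => hclosed x hx List.not_mem_nil)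
    | x :: st' =>
      rw [dfsA]
      by_cases h : ((nb x \ A).filter (· ∈ S)).Nonempty
      · rw [dif_pos h]
        set u := ((nb x \ A).filter (· ∈ S)).min' h with hu
        have humem := Finset.min'_mem _ h
        rw [Finset.mem_filter, Finset.mem_sdiff] at humem
        obtain ⟨⟨hunb, hunA⟩, huS⟩ := humem
        have hcardlt : A.card < S.card :=
          Finset.card_lt_card (Finset.ssubset_iff_of_subset hsub |>.mpr ⟨u, huS, hunA⟩)
        apply ih
        · intro z hz
          rcases List.mem_cons.mp hz with rfl | hz
          · exact Finset.mem_insert_self _ _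
          · exact Finset.mem_insert_of_mem (hst z hz)
        · refine List.nodup_cons.mpr ⟨?_, hnd⟩
          intro hmem
          exact hunA (hst u hmem)
        · exact Finset.insert_subset huS hsub
        · exact ⟨u, Finset.mem_insert_self _ _⟩
        · intro z hz hznst y hynb hyS
          have hzu : z ≠ u := fun hh => hznst (hh ▸ List.mem_cons_self)
          have hzA : z ∈ A := by
            rcases Finset.mem_insert.mp hz with rfl | hz'
            · exact absurd rfl hzu
            · exact hz'
          have hznst' : z ∉ x :: st' := fun hh => hznst (List.mem_cons_of_mem _ hh)
          exact Finset.mem_insert_of_mem (hclosed z hzA hznst' y hynb hyS)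
        · rw [Finset.card_insert_of_notMem hunA]
          simp only [List.length_cons] at hmeas ⊢
          omega
      · rw [dif_neg h]
        apply ih
        · intro z hz; exact hst z (List.mem_cons_of_mem _ hz)
        · exact (List.nodup_cons.mp hnd).2
        · exact hsub
        · exact hne
        · intro z hz hznst y hynb hyS
          by_cases hzx : z = x
          · subst hzx
            by_contra hyA
            have : y ∈ (nb z \ A).filter (· ∈ S) :=
              Finset.mem_filter.mpr ⟨Finset.mem_sdiff.mpr ⟨hynb, hyA⟩, hyS⟩
            exact h ⟨y, this⟩
          · exact hclosed z hz (fun hh => (List.mem_cons.mp hh).elim hzx hznst) y hynb hyS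
        · simp only [List.length_cons] at hmeas
          omega



end DFS

section Count
variable [LinearOrder V] [Fintype V]

def padCode : List (Bool × ℕ) → List Bool × List ℕ
  | [] => ([], [])
  | (b, j) :: m => ((b :: (padCode m).1), if b then j :: (padCode m).2 else (padCode m).2)

def unpad : List Bool → List ℕ → List (Bool × ℕ)
  | [], _ => []
  | true :: p, j :: js => (true, j) :: unpad p js
  | true :: _, [] => []
  | false :: p, js => (false, 0) :: unpad p js

lemma unpad_padCode : ∀ l : List (Bool × ℕ), (∀ x ∈ l, x.1 = false → x.2 = 0) →
    unpad (padCode l).1 (padCode l).2 = l := by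
  intro l
  induction l with
  | nil => intro _; rfl
  | cons a m ih =>
    intro hprop
    obtain ⟨b, j⟩ := a
    have ihm := ih (fun x hx => hprop x (List.mem_cons_of_mem _ hx))
    cases b with
    | true =>
      show unpad (true :: (padCode m).1) (j :: (padCode m).2) = _
      rw [unpad, ihm]
    | false =>
      have hj : j = 0 := hprop (false, j) (List.mem_cons_self) rfl
      subst hj
      show unpad (false :: (padCode m).1) (padCode m).2 = _
      rw [unpad, ihm]

lemma padCode_fst_length : ∀ l : List (Bool × ℕ), (padCode l).1.length = l.length := by
  intro l
  induction l with
  | nil => rfl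
  | cons a m ih =>
    obtain ⟨b, j⟩ := a
    show (b :: (padCode m).1).length = _
    simp [ih]

lemma padCode_snd_length : ∀ l : List (Bool × ℕ),
    (padCode l).2.length = l.countP (fun p => p.1) := by
  intro l
  induction l with
  | nil => rfl
  | cons a m ih =>
    obtain ⟨b, j⟩ := a
    rw [List.countP_cons]
    cases b with
    | true =>
      show (j :: (padCode m).2).length = _
      simp [ih]
    | false =>
      show (padCode m).2.length = _
      simp [ih]

lemma padCode_snd_lt {D : ℕ} : ∀ l : List (Bool × ℕ), (∀ x ∈ l, x.2 < D) →
    ∀ j ∈ (padCode l).2, j < D := by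
  intro l
  induction l with
  | nil => intro _ j hj; simp [padCode] at hj
  | cons a m ih =>
    intro hl j hj
    obtain ⟨b, j'⟩ := a
    have ihm := ih (fun x hx => hl x (List.mem_cons_of_mem _ hx))
    cases b with
    | true =>
      have : j ∈ j' :: (padCode m).2 := hj
      rcases List.mem_cons.mp this with rfl | hmem
      · exact hl (true, j) (List.mem_cons_self)
      · exact ihm j hmem
    | false =>
      exact ihm j hj



lemma card_family_le (nb : V → Finset V) (D k : ℕ) (hD : ∀ x, (nb x).card ≤ D)
    (hD0 : 0 < D) (hk : 1 ≤ k) (v : V) (F : Finset (Finset V))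
    (hF : ∀ S ∈ F, v ∈ S ∧ S.card = k ∧ (∀ A : Finset V, A ⊆ S → A.Nonempty → A ≠ S →
      ∃ x ∈ A, ∃ y ∈ S, y ∉ A ∧ y ∈ nb x)) :
    F.card ≤ 2 ^ (2 * k) * (k * D ^ (k - 1)) := by
  classical
  set T := (Fin (2 * k) → Bool) × Fin k × (Fin (k - 1) → Fin D) with hT
  haveI : NeZero k := ⟨by omega⟩
  haveI : NeZero D := ⟨by omega⟩
  set enc : Finset V → T := fun S =>
    (fun i => (padCode (dfsT nb S (2 * k) ([v]) {v})).1.getD i false,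
     ⟨(padCode (dfsT nb S (2 * k) ([v]) {v})).2.length % k, Nat.mod_lt _ (by omega)⟩,
     fun i => ⟨(padCode (dfsT nb S (2 * k) ([v]) {v})).2.getD i 0 % D, Nat.mod_lt _ (by omega)⟩)
    with henc
  -- facts about members
  have hfacts : ∀ S ∈ F, (padCode (dfsT nb S (2 * k) ([v]) {v})).1.length = 2 * k ∧
      (padCode (dfsT nb S (2 * k) ([v]) {v})).2.length ≤ k - 1 ∧
      (∀ j ∈ (padCode (dfsT nb S (2 * k) ([v]) {v})).2, j < D) ∧
      Shat.run nb (dfsT nb S (2 * k) ([v]) {v}) ([v]) ({v} : Finset V) = S := by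
    intro S hS
    obtain ⟨hv, hcard, hcross⟩ := hF S hS
    have hsub : ({v} : Finset V) ⊆ S := Finset.singleton_subset_iff.mpr hv
    refine ⟨?_, ?_, ?_, ?_⟩
    · rw [padCode_fst_length, dfsT_length]
    · rw [padCode_snd_length]
      have := dfsT_countP nb S (2 * k) ([v]) {v} hsub
      simp only [Finset.card_singleton] at this
      omega
    · exact padCode_snd_lt _ (fun x hx => (dfsT_entries nb S D hD hD0 (2 * k) ([v]) {v} x hx).2)
    · rw [run_dfsT]
      apply dfsA_eq_of nb S hcross
      · intro z hz
        rcases List.mem_cons.mp hz with rfl | hz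
        · exact Finset.mem_singleton_self _
        · simp at hz
      · exact List.nodup_singleton v
      · exact hsub
      · exact Finset.singleton_nonempty v
      · intro z hz hznst
        rw [Finset.mem_singleton] at hz
        subst hz
        exact absurd (List.mem_singleton_self z) hznst
      · simp only [List.length_cons, List.length_nil, Finset.card_singleton]
        omega
  have hinj : Set.InjOn enc F := by
    intro S₁ hS₁ S₂ hS₂ heq
    obtain ⟨hp1, hjs1, hlt1, hrun1⟩ := hfacts S₁ hS₁
    obtain ⟨hp2, hjs2, hlt2, hrun2⟩ := hfacts S₂ hS₂
    set l₁ := dfsT nb S₁ (2 * k) ([v]) {v} with hl₁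
    set l₂ := dfsT nb S₂ (2 * k) ([v]) {v} with hl₂
    have h1 := congrArg Prod.fst heq
    have h2 := congrArg (fun x : T => x.2.1) heq
    have h3 := congrArg (fun x : T => x.2.2) heq
    simp only [henc] at h1 h2 h3
    -- fst lists equal
    have hfst : (padCode l₁).1 = (padCode l₂).1 := by
      apply List.ext_getElem (by rw [hp1, hp2])
      intro i hi1 hi2
      have hik : i < 2 * k := by rwa [hp1] at hi1
      have := congrFun h1 ⟨i, hik⟩
      simp only at this
      rw [List.getD_eq_getElem _ _ hi1, List.getD_eq_getElem _ _ hi2] at this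
      exact this
    -- lengths of snd equal
    have hlen : (padCode l₁).2.length = (padCode l₂).2.length := by
      have := Fin.mk.injEq _ _ _ _ ▸ h2
      have hmod : (padCode l₁).2.length % k = (padCode l₂).2.length % k := by
        have := congrArg Fin.val h2
        simpa using this
      rw [Nat.mod_eq_of_lt (by omega), Nat.mod_eq_of_lt (by omega)] at hmod
      exact hmod
    -- snd lists equal
    have hsnd : (padCode l₁).2 = (padCode l₂).2 := by
      apply List.ext_getElem hlen
      intro i hi1 hi2
      have hik : i < k - 1 := by omega
      have := congrArg Fin.val (congrFun h3 ⟨i, hik⟩)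
      simp only at this
      rw [List.getD_eq_getElem _ _ hi1, List.getD_eq_getElem _ _ hi2] at this
      rwa [Nat.mod_eq_of_lt (hlt1 _ (List.getElem_mem _)),
        Nat.mod_eq_of_lt (hlt2 _ (List.getElem_mem _))] at this
    have hl : l₁ = l₂ := by
      have e1 := unpad_padCode l₁ (fun x hx => (dfsT_entries nb S₁ D hD hD0 _ _ _ x hx).1)
      have e2 := unpad_padCode l₂ (fun x hx => (dfsT_entries nb S₂ D hD hD0 _ _ _ x hx).1)
      rw [← e1, ← e2, hfst, hsnd]
    rw [← hrun1, ← hrun2, hl]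
  calc F.card ≤ (Finset.univ : Finset T).card :=
        Finset.card_le_card_of_injOn enc (fun _ _ => Finset.mem_univ _) hinj
  _ = Fintype.card T := rfl
  _ = 2 ^ (2 * k) * (k * D ^ (k - 1)) := by
      show Fintype.card ((Fin (2 * k) → Bool) × Fin k × (Fin (k - 1) → Fin D)) = _
      rw [Fintype.card_prod, Fintype.card_prod, Fintype.card_fun, Fintype.card_fun]
      simp



end Count


lemma nat_factor_le (k s Δ : ℕ) :
    2 ^ (2 * k) * (k * (2 * Δ ^ (s + 8)) ^ (k - 1)) ≤ 16 ^ k * Δ ^ ((s + 8) * (k - 1)) := by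
  have h1 : (2 * Δ ^ (s + 8)) ^ (k - 1) = 2 ^ (k - 1) * Δ ^ ((s + 8) * (k - 1)) := by
    rw [mul_pow, ← pow_mul]
  rw [h1]
  have hk2 : k ≤ 2 ^ k := Nat.le_of_lt (Nat.lt_two_pow_self)
  calc 2 ^ (2 * k) * (k * (2 ^ (k - 1) * Δ ^ ((s + 8) * (k - 1))))
      = (2 ^ (2 * k) * k * 2 ^ (k - 1)) * Δ ^ ((s + 8) * (k - 1)) := by ring
  _ ≤ (2 ^ (2 * k) * 2 ^ k * 2 ^ k) * Δ ^ ((s + 8) * (k - 1)) := by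
      have : 2 ^ (2 * k) * k * 2 ^ (k - 1) ≤ 2 ^ (2 * k) * 2 ^ k * 2 ^ k :=
        Nat.mul_le_mul (Nat.mul_le_mul_left _ hk2) (Nat.pow_le_pow_right (by norm_num) (by omega))
      exact Nat.mul_le_mul_right _ this
  _ = 16 ^ k * Δ ^ ((s + 8) * (k - 1)) := by
      rw [show (16 : ℕ) = 2 ^ 4 by norm_num, ← pow_mul, ← pow_add, ← pow_add]
      ring_nf

lemma real_bound (n Δ s k : ℕ) (hΔ8 : 8 ≤ Δ) (hΔn : Δ ≤ n) (hs : 1 ≤ s) (hk : 1 ≤ k)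
    (t c : ℝ) (ht : t = Real.log n / Real.log Δ) (hc : 8 ≤ c)
    (hkt : t ≤ (k : ℝ)) (hkt1 : (k : ℝ) ≤ t + 1) :
    ((n * (2 ^ (2 * k) * (k * (2 * Δ ^ (s + 8)) ^ (k - 1))) : ℕ) : ℝ) *
      (Δ : ℝ) ^ (-((s : ℝ) + c) * (k : ℝ)) ≤ (n : ℝ) ^ (11 - c) := by
  set a : ℝ := (Δ : ℝ) with ha
  have ha8 : (8 : ℝ) ≤ a := by rw [ha]; exact_mod_cast hΔ8
  have ha0 : (0 : ℝ) < a := by linarith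
  have ha1 : (1 : ℝ) ≤ a := by linarith
  have hn8 : (8 : ℝ) ≤ (n : ℝ) := by
    have : (Δ : ℝ) ≤ (n : ℝ) := by exact_mod_cast hΔn
    linarith
  have hn0 : (0 : ℝ) < (n : ℝ) := by linarith
  have hloga : 0 < Real.log a := Real.log_pos (by linarith)
  have hnat : (n : ℝ) = a ^ t := by
    rw [ht, Real.rpow_def_of_pos ha0]
    rw [mul_comm, div_mul_cancel₀ _ (ne_of_gt hloga), Real.exp_log hn0]
  have ht0 : 0 ≤ t := by
    rw [ht]
    apply div_nonneg (Real.log_nonneg (by linarith)) (le_of_lt hloga)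
  have hrpow0 : (0:ℝ) < a ^ (-((s : ℝ) + c) * (k : ℝ)) := Real.rpow_pos_of_pos ha0 _
  -- step 1 : reduce the natural factor
  have step1 : ((n * (2 ^ (2 * k) * (k * (2 * Δ ^ (s + 8)) ^ (k - 1))) : ℕ) : ℝ) ≤
      (n : ℝ) * ((16 ^ k * Δ ^ ((s + 8) * (k - 1)) : ℕ) : ℝ) := by
    rw [← Nat.cast_mul]
    exact_mod_cast Nat.mul_le_mul_left n (nat_factor_le k s Δ)
  -- 16 ^ k ≤ a ^ ((4/3) * k)
  have h16 : ((16 : ℝ)) ^ (k : ℕ) ≤ a ^ ((4 / 3 : ℝ) * (k : ℝ)) := by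
    have h8 : (16 : ℝ) ≤ a ^ ((4 / 3 : ℝ)) := by
      have : ((8 : ℝ)) ^ ((4 / 3 : ℝ)) ≤ a ^ ((4 / 3 : ℝ)) :=
        Real.rpow_le_rpow (by norm_num) ha8 (by norm_num)
      have h84 : ((8 : ℝ)) ^ ((4 / 3 : ℝ)) = 16 := by
        rw [show (8 : ℝ) = 2 ^ (3 : ℕ) by norm_num, ← Real.rpow_natCast 2 3,
          ← Real.rpow_mul (by norm_num)]
        norm_num
      linarith
    calc ((16 : ℝ)) ^ (k : ℕ) = ((16 : ℝ)) ^ ((k : ℕ) : ℝ) := (Real.rpow_natCast _ _).symm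
    _ ≤ (a ^ ((4 / 3 : ℝ))) ^ ((k : ℕ) : ℝ) :=
        Real.rpow_le_rpow (by norm_num) h8 (by positivity)
    _ = a ^ ((4 / 3 : ℝ) * (k : ℝ)) := by
        rw [← Real.rpow_mul (le_of_lt ha0)]
  -- assemble
  have hmid : ((16 ^ k * Δ ^ ((s + 8) * (k - 1)) : ℕ) : ℝ) ≤
      a ^ ((4 / 3 : ℝ) * (k : ℝ) + (((s : ℝ) + 8) * ((k : ℝ) - 1))) := by
    push_cast
    rw [Real.rpow_add ha0]
    have h2 : (a : ℝ) ^ ((s + 8) * (k - 1) : ℕ) = a ^ ((((s : ℝ) + 8) * ((k : ℝ) - 1))) := by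
      rw [← Real.rpow_natCast a ((s + 8) * (k - 1))]
      congr 1
      push_cast [Nat.cast_sub hk]
      ring
    rw [← h2]
    exact mul_le_mul_of_nonneg_right h16 (by positivity)
  have hexp : (4 / 3 : ℝ) * (k : ℝ) + (((s : ℝ) + 8) * ((k : ℝ) - 1)) +
      (-((s : ℝ) + c) * (k : ℝ)) ≤ t * (10 - c) := by
    have hs1 : (1 : ℝ) ≤ (s : ℝ) := by exact_mod_cast hs
    have hk1 : (1 : ℝ) ≤ (k : ℝ) := by exact_mod_cast hk
    rcases le_or_gt c (28 / 3) with hcase | hcase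
    · nlinarith [mul_le_mul_of_nonneg_left hkt1 (show (0:ℝ) ≤ 28/3 - c by linarith),
        mul_nonneg ht0 (show (0:ℝ) ≤ 28/3 - c by linarith)]
    · nlinarith [mul_le_mul_of_nonneg_left hkt (show (0:ℝ) ≤ c - 28/3 by linarith),
        mul_nonneg ht0 (show (0:ℝ) ≤ c - 28/3 by linarith)]
  calc ((n * (2 ^ (2 * k) * (k * (2 * Δ ^ (s + 8)) ^ (k - 1))) : ℕ) : ℝ) *
      a ^ (-((s : ℝ) + c) * (k : ℝ))
      ≤ ((n : ℝ) * ((16 ^ k * Δ ^ ((s + 8) * (k - 1)) : ℕ) : ℝ)) *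
        a ^ (-((s : ℝ) + c) * (k : ℝ)) :=
        mul_le_mul_of_nonneg_right step1 (le_of_lt hrpow0)
  _ ≤ ((n : ℝ) * a ^ ((4 / 3 : ℝ) * (k : ℝ) + (((s : ℝ) + 8) * ((k : ℝ) - 1)))) *
        a ^ (-((s : ℝ) + c) * (k : ℝ)) := by
        apply mul_le_mul_of_nonneg_right _ (le_of_lt hrpow0)
        exact mul_le_mul_of_nonneg_left hmid (le_of_lt hn0)
  _ = (n : ℝ) * a ^ ((4 / 3 : ℝ) * (k : ℝ) + (((s : ℝ) + 8) * ((k : ℝ) - 1)) +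
        (-((s : ℝ) + c) * (k : ℝ))) := by
        rw [mul_assoc, ← Real.rpow_add ha0]
  _ ≤ (n : ℝ) * a ^ (t * (10 - c)) := by
        apply mul_le_mul_of_nonneg_left _ (le_of_lt hn0)
        exact Real.rpow_le_rpow_of_exponent_le ha1 hexp
  _ = (n : ℝ) ^ (11 - c) := by
        rw [Real.rpow_mul (le_of_lt ha0), ← hnat]
        nth_rewrite 1 [show (n:ℝ) = (n:ℝ) ^ (1:ℝ) by rw [Real.rpow_one]]
        rw [← Real.rpow_add hn0]
        congr 1
        ring

end Shat

open Shat Finset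

set_option maxHeartbeats 1000000 in
/-- **Shattering.** If `H` is a graph on `n` vertices with maximum degree at most `Δ`
(`8 ≤ Δ ≤ n`), `t = log n / log Δ`, `s ≥ 1`, `c ≥ 8`, and `B` is a random subset such that
every `5`-independent set `U` satisfies `P(U ⊆ B) ≤ Δ^(-(s+c)|U|)`, then:
(P1) with probability at least `1 - n^(11-c)` there is no `5`-independent, `(s+8)`-connected
subset `U ⊆ B` with `|U| ≥ t`; and
(P2) with probability at least `1 - n^(11-c)` every `s`-connected subset `C ⊆ B`
has fewer than `t·(1+Δ+Δ²+Δ³+Δ⁴)` vertices. -/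
theorem shattering
    {V Ω : Type*} [Fintype V] [MeasureSpace Ω] [IsProbabilityMeasure (ℙ : Measure Ω)]
    (H : SimpleGraph V) [DecidableRel H.Adj]
    (n Δ : ℕ) (hn : Fintype.card V = n)
    (hΔ8 : 8 ≤ Δ) (hΔn : Δ ≤ n)
    (hdeg : ∀ v : V, H.degree v ≤ Δ)
    (t : ℝ) (ht : t = Real.log n / Real.log Δ)
    (s : ℕ) (hs : 1 ≤ s) (c : ℝ) (hc : 8 ≤ c)
    (B : Ω → Set V)
    (hmeas : ∀ U : Finset V, MeasurableSet {ω | (U : Set V) ⊆ B ω})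
    (hB : ∀ U : Finset V, Indep H 5 (U : Set V) →
      ℙ {ω | (U : Set V) ⊆ B ω} ≤
        ENNReal.ofReal ((Δ : ℝ) ^ (-((s : ℝ) + c) * (U.card : ℝ)))) :
    ℙ {ω | ∃ U : Finset V, (U : Set V) ⊆ B ω ∧ Indep H 5 (U : Set V) ∧
        sConnected H (s + 8) (U : Set V) ∧ t ≤ (U.card : ℝ)}
      ≤ ENNReal.ofReal ((n : ℝ) ^ (11 - c)) ∧
    ℙ {ω | ∃ C : Finset V, (C : Set V) ⊆ B ω ∧ sConnected H s (C : Set V) ∧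
        t * (1 + (Δ : ℝ) + (Δ : ℝ) ^ 2 + (Δ : ℝ) ^ 3 + (Δ : ℝ) ^ 4) ≤ (C.card : ℝ)}
      ≤ ENNReal.ofReal ((n : ℝ) ^ (11 - c)) := by
  classical
  letI : LinearOrder V := LinearOrder.lift' (Fintype.equivFin V) (Fintype.equivFin V).injective
  -- numeric setup
  have hΔ0 : (0:ℝ) < (Δ:ℝ) := by
    have : (0:ℕ) < Δ := by omega
    exact_mod_cast this
  have hΔ1 : (1:ℝ) < (Δ:ℝ) := by
    have : (1:ℕ) < Δ := by omega
    exact_mod_cast this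
  have hnΔ : (Δ:ℝ) ≤ (n:ℝ) := by exact_mod_cast hΔn
  have hn0 : (0:ℝ) < (n:ℝ) := by linarith
  have hloga : 0 < Real.log (Δ:ℝ) := Real.log_pos hΔ1
  have ht1 : 1 ≤ t := by
    rw [ht, le_div_iff₀ hloga, one_mul]
    exact Real.log_le_log hΔ0 hnΔ
  have ht0 : 0 < t := by linarith
  set k : ℕ := ⌈t⌉₊ with hkdef
  have hk1 : 1 ≤ k := Nat.one_le_ceil_iff.mpr ht0
  have hkt : t ≤ (k:ℝ) := Nat.le_ceil t
  have hkt1 : (k:ℝ) ≤ t + 1 := le_of_lt (Nat.ceil_lt_add_one (le_of_lt ht0))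
  -- neighborhood structure of auxiliary graph
  set nb : V → Finset V := fun x => Finset.univ.filter (fun y => (aux H (s+8)).Adj x y) with hnbdef
  have hnb : ∀ x y, y ∈ nb x ↔ (aux H (s+8)).Adj x y := by
    intro x y; simp [hnbdef]
  set D : ℕ := 2 * Δ ^ (s + 8) with hDdef
  have hD0 : 0 < D := by positivity
  have hD : ∀ x, (nb x).card ≤ D := by
    intro x
    have hsub : nb x ⊆ ball H x (s + 8) := by
      intro y hy
      rw [hnb] at hy
      rw [ball, Finset.mem_filter]
      exact ⟨Finset.mem_univ _, hy.2⟩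
    calc (nb x).card ≤ (ball H x (s+8)).card := Finset.card_le_card hsub
    _ ≤ ∑ i ∈ Finset.range (s + 8 + 1), Δ ^ i := card_ball_le hdeg (s + 8)
    _ ≤ 2 * Δ ^ (s + 8) := geom_le (by omega) (s + 8)
  -- the family of candidate sets
  set Fv : V → Finset (Finset V) := fun v => Finset.univ.filter
    (fun S : Finset V => v ∈ S ∧ S.card = k ∧ Indep H 5 (S : Set V) ∧ Gconn (aux H (s+8)) S)
    with hFvdef
  set F : Finset (Finset V) := Finset.univ.biUnion Fv with hFdef
  have hFvcard : ∀ v, (Fv v).card ≤ 2 ^ (2 * k) * (k * D ^ (k - 1)) := by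
    intro v
    apply card_family_le nb D k hD hD0 hk1 v
    intro S hS
    rw [hFvdef, Finset.mem_filter] at hS
    obtain ⟨_, hv, hcard, _, hgconn⟩ := hS
    refine ⟨hv, hcard, ?_⟩
    intro A hA hAne hAS
    obtain ⟨x, hx, y, hyS, hyA, hadj⟩ := hgconn.cross hA hAne hAS
    exact ⟨x, hx, y, hyS, hyA, (hnb x y).mpr hadj⟩
  have hFcard : F.card ≤ n * (2 ^ (2 * k) * (k * D ^ (k - 1))) := by
    calc F.card ≤ ∑ v ∈ Finset.univ, (Fv v).card := Finset.card_biUnion_le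
    _ ≤ ∑ _v ∈ (Finset.univ : Finset V), 2 ^ (2 * k) * (k * D ^ (k - 1)) :=
        Finset.sum_le_sum (fun v _ => hFvcard v)
    _ = n * (2 ^ (2 * k) * (k * D ^ (k - 1))) := by
        rw [Finset.sum_const, smul_eq_mul, Finset.card_univ, hn]
  -- event inclusion for P1
  have hsubset1 : {ω | ∃ U : Finset V, (U : Set V) ⊆ B ω ∧ Indep H 5 (U : Set V) ∧
        sConnected H (s + 8) (U : Set V) ∧ t ≤ (U.card : ℝ)}
      ⊆ ⋃ S ∈ F, {ω | (S : Set V) ⊆ B ω} := by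
    intro ω hω
    obtain ⟨U, hUB, hUind, hUconn, hUcard⟩ := hω
    have hUk : k ≤ U.card := Nat.ceil_le.mpr hUcard
    have hUne : U.Nonempty := Finset.card_pos.mp (by omega)
    obtain ⟨v, hv⟩ := hUne
    have hg : Gconn (aux H (s+8)) U := gconn_of_sConnected hUconn
    obtain ⟨S', hS'U, hvS', hS'conn, hS'card⟩ := exists_conn_subset hg hv k hk1 hUk
    refine Set.mem_iUnion₂.mpr ⟨S', ?_, ?_⟩
    · rw [hFdef, Finset.mem_biUnion]
      refine ⟨v, Finset.mem_univ _, ?_⟩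
      rw [hFvdef, Finset.mem_filter]
      refine ⟨Finset.mem_univ _, hvS', hS'card, ?_, hS'conn⟩
      intro u hu w hw hne
      exact hUind u (hS'U hu) w (hS'U hw) hne
    · exact fun x hx => hUB (hS'U hx)
  -- probability bound for the union
  have hPF : ℙ (⋃ S ∈ F, {ω | (S : Set V) ⊆ B ω}) ≤ ENNReal.ofReal ((n : ℝ) ^ (11 - c)) := by
    set q : ℝ≥0∞ := ENNReal.ofReal ((Δ : ℝ) ^ (-((s : ℝ) + c) * (k : ℝ))) with hq
    calc ℙ (⋃ S ∈ F, {ω | (S : Set V) ⊆ B ω}) ≤ ∑ S ∈ F, ℙ {ω | (S : Set V) ⊆ B ω} :=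
        measure_biUnion_finset_le F _
    _ ≤ ∑ S ∈ F, q := by
        apply Finset.sum_le_sum
        intro S hS
        rw [hFdef, Finset.mem_biUnion] at hS
        obtain ⟨v, _, hSv⟩ := hS
        rw [hFvdef, Finset.mem_filter] at hSv
        obtain ⟨_, _, hcard, hind, _⟩ := hSv
        have := hB S hind
        rw [hcard] at this
        exact this
    _ = (F.card : ℝ≥0∞) * q := by rw [Finset.sum_const, nsmul_eq_mul]
    _ ≤ ((n * (2 ^ (2 * k) * (k * D ^ (k - 1))) : ℕ) : ℝ≥0∞) * q := by
        apply mul_le_mul_left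
        exact_mod_cast hFcard
    _ ≤ ENNReal.ofReal ((n : ℝ) ^ (11 - c)) := by
        rw [hq, ← ENNReal.ofReal_natCast, ← ENNReal.ofReal_mul (by positivity)]
        apply ENNReal.ofReal_le_ofReal
        exact real_bound n Δ s k hΔ8 hΔn hs hk1 t c ht hc hkt hkt1
  have hP1 : ℙ {ω | ∃ U : Finset V, (U : Set V) ⊆ B ω ∧ Indep H 5 (U : Set V) ∧
        sConnected H (s + 8) (U : Set V) ∧ t ≤ (U.card : ℝ)}
      ≤ ENNReal.ofReal ((n : ℝ) ^ (11 - c)) :=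
    le_trans (measure_mono hsubset1) hPF
  refine ⟨hP1, ?_⟩
  -- P2 : event inclusion into the P1 event
  have hsubset2 : {ω | ∃ C : Finset V, (C : Set V) ⊆ B ω ∧ sConnected H s (C : Set V) ∧
        t * (1 + (Δ : ℝ) + (Δ : ℝ) ^ 2 + (Δ : ℝ) ^ 3 + (Δ : ℝ) ^ 4) ≤ (C.card : ℝ)}
      ⊆ {ω | ∃ U : Finset V, (U : Set V) ⊆ B ω ∧ Indep H 5 (U : Set V) ∧
        sConnected H (s + 8) (U : Set V) ∧ t ≤ (U.card : ℝ)} := by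
    intro ω hω
    obtain ⟨C, hCB, hCconn, hCcard⟩ := hω
    set σ : ℕ := ∑ i ∈ Finset.range 5, Δ ^ i with hσdef
    have hσcast : ((σ : ℕ) : ℝ) = 1 + (Δ:ℝ) + (Δ:ℝ)^2 + (Δ:ℝ)^3 + (Δ:ℝ)^4 := by
      rw [hσdef]
      rw [Finset.sum_range_succ, Finset.sum_range_succ, Finset.sum_range_succ,
        Finset.sum_range_succ, Finset.sum_range_succ, Finset.sum_range_zero]
      push_cast
      ring
    have hσ0 : (0:ℝ) < (σ : ℝ) := by rw [hσcast]; positivity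
    -- maximal 5-independent subset of C
    obtain ⟨U, hUle, hUmax⟩ := Finite.exists_le_maximal
      (p := fun U : Finset V => U ⊆ C ∧ Indep H 5 (U : Set V))
      (a := (∅ : Finset V)) ⟨Finset.empty_subset C, by intro u hu; simp at hu⟩
    obtain ⟨⟨hUC, hUind⟩, hUmax'⟩ := hUmax
    -- covering property
    have hcov : ∀ x ∈ C, ∃ u ∈ U, H.edist u x ≤ (4 : ℕ∞) := by
      intro x hx
      by_contra hcon
      push_neg at hcon
      have hxU : x ∉ U := by
        intro hxU
        have := hcon x hxU
        rw [SimpleGraph.edist_self] at this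
        exact absurd (by norm_num : (0:ℕ∞) ≤ 4) (not_le.mpr this)
      have hind' : Indep H 5 ((insert x U : Finset V) : Set V) := by
        intro u hu w hw hne
        rw [Finset.coe_insert, Set.mem_insert_iff] at hu hw
        have hfive : ∀ z ∈ U, (5 : ℕ∞) ≤ H.edist x z := by
          intro z hz
          have h4 : (4:ℕ∞) < H.edist z x := hcon z hz
          have : (4:ℕ∞) + 1 ≤ H.edist z x := Order.add_one_le_of_lt h4
          rw [SimpleGraph.edist_comm] at this
          calc (5:ℕ∞) = 4 + 1 := by norm_num
          _ ≤ H.edist x z := this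
        rcases hu with rfl | hu
        · rcases hw with rfl | hw
          · exact absurd rfl hne
          · exact hfive w hw
        · rcases hw with rfl | hw
          · rw [H.edist_comm]; exact hfive u hu
          · exact hUind u hu w hw hne
      have hmem : insert x U ⊆ C ∧ Indep H 5 ((insert x U : Finset V) : Set V) :=
        ⟨Finset.insert_subset hx hUC, hind'⟩
      have := hUmax' hmem (Finset.subset_insert x U)
      exact hxU (this (Finset.mem_insert_self x U))
    -- size of U
    have hcardC : C.card ≤ U.card * σ := by
      have hsub : C ⊆ U.biUnion (fun u => ball H u 4) := by
        intro x hx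
        obtain ⟨u, hu, hd⟩ := hcov x hx
        rw [Finset.mem_biUnion]
        exact ⟨u, hu, by rw [ball, Finset.mem_filter]; exact ⟨Finset.mem_univ _, hd⟩⟩
      calc C.card ≤ _ := Finset.card_le_card hsub
      _ ≤ ∑ u ∈ U, (ball H u 4).card := Finset.card_biUnion_le
      _ ≤ ∑ _u ∈ U, σ := Finset.sum_le_sum (fun u _ => by
          have := card_ball_le hdeg (u := u) 4
          simpa [hσdef] using this)
      _ = U.card * σ := by rw [Finset.sum_const, smul_eq_mul]
    have htU : t ≤ (U.card : ℝ) := by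
      have h1 : t * (σ:ℝ) ≤ (C.card : ℝ) := by rw [hσcast]; exact hCcard
      have h2 : (C.card : ℝ) ≤ (U.card : ℝ) * (σ:ℝ) := by exact_mod_cast hcardC
      have := le_trans h1 h2
      exact le_of_mul_le_mul_right this hσ0
    -- (s+8)-connectivity of U
    have hUconn : sConnected H (s + 8) (U : Set V) := by
      intro S' hsub hne hneq
      obtain ⟨u₀, hu₀⟩ := hne
      obtain ⟨w₀, hw₀U, hw₀S'⟩ := Set.exists_of_ssubset (ssubset_iff_subset_ne.mpr ⟨hsub, hneq⟩)
      set C1 : Set V := {x | x ∈ (C : Set V) ∧ ∃ u ∈ S', H.edist x u ≤ (4:ℕ∞)} with hC1def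
      have hC1sub : C1 ⊆ (C : Set V) := fun x hx => hx.1
      have hu₀C1 : u₀ ∈ C1 := by
        refine ⟨hUC (hsub hu₀), u₀, hu₀, ?_⟩
        rw [SimpleGraph.edist_self]
        norm_num
      have hw₀C1 : w₀ ∉ C1 := by
        intro hw
        obtain ⟨_, u, hu, hd⟩ := hw
        have hne' : w₀ ≠ u := fun hh => hw₀S' (hh ▸ hu)
        have := hUind w₀ hw₀U u (hsub hu) hne'
        have h5 : (5:ℕ∞) ≤ (4:ℕ∞) := le_trans this hd
        norm_num at h5
      have hC1ne : C1 ≠ (C : Set V) := by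
        intro hh
        exact hw₀C1 (hh ▸ (hUC hw₀U : w₀ ∈ (C : Set V)))
      have hd := hCconn C1 hC1sub ⟨u₀, hu₀C1⟩ hC1ne
      obtain ⟨x, hxC1, y, hyC, hxy⟩ := exists_edist_le_of_sdist_le hd
      obtain ⟨hxC, u, hu, hux⟩ := hxC1
      obtain ⟨hyC', hyC1⟩ := hyC
      obtain ⟨u'', hu''U, hu''y⟩ := hcov y hyC'
      have hu''S' : u'' ∉ S' := by
        intro hmem
        exact hyC1 ⟨hyC', u'', hmem, by rwa [H.edist_comm]⟩
      have hgoal : H.edist u u'' ≤ ((4:ℕ∞) + (s:ℕ∞)) + (4:ℕ∞) := by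
        calc H.edist u u'' ≤ H.edist u y + H.edist y u'' := H.edist_triangle
        _ ≤ (H.edist u x + H.edist x y) + H.edist y u'' := by
            apply add_le_add_left
            exact H.edist_triangle
        _ ≤ ((4:ℕ∞) + (s:ℕ∞)) + (4:ℕ∞) := by
            apply add_le_add
            apply add_le_add
            · rw [H.edist_comm]; exact hux
            · exact hxy
            · rw [H.edist_comm]
              exact hu''y
      calc sdist H S' ((U : Set V) \ S') ≤ H.edist u u'' :=
          sdist_le_of_mem hu ⟨hu''U, hu''S'⟩
      _ ≤ ((4:ℕ∞) + (s:ℕ∞)) + (4:ℕ∞) := hgoal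
      _ = ((s + 8 : ℕ) : ℕ∞) := by push_cast; ring
    exact ⟨U, fun x hx => hCB (Finset.coe_subset.mpr hUC hx), hUind, hUconn, htU⟩
  exact le_trans (measure_mono hsubset2) hP1
end

section
/- Let n ≥ 3 and let Δ be an integer with 3 ≤ Δ ≤ n, set t := log n / log Δ, and let c ≥ 5 be a real number. Let H be a finite simple graph with at most t·Δ⁴ vertices. Let B be a random subset of the vertex set of H such that for every vertex set U that is 5-independent in H, P(U ⊆ B) ≤ Δ^{−c·|U|}. Then the probability that there exists a vertex set U ⊆ B that is 5-independent in H with |U| ≥ t is at most n^{5−c}. -/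
open scoped ENNReal
open MeasureTheory
open scoped ProbabilityTheory

lemma key_real (n Δ N : ℕ) (t c : ℝ) (hn : 3 ≤ n) (hΔ3 : 3 ≤ Δ) (hΔn : Δ ≤ n)
    (ht : t = Real.log n / Real.log Δ) (hc : 5 ≤ c)
    (hN : (N : ℝ) ≤ t * (Δ : ℝ) ^ 4) :
    (N.choose ⌈t⌉₊ : ℝ) * (Δ : ℝ) ^ (-c * (⌈t⌉₊ : ℝ)) ≤ (n : ℝ) ^ (5 - c) := by
  set k := ⌈t⌉₊ with hk
  have hΔ1 : (1 : ℝ) < Δ := by exact_mod_cast lt_of_lt_of_le (by norm_num) hΔ3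
  have hΔ0 : (0 : ℝ) < Δ := by linarith
  have hΔ3' : (3 : ℝ) ≤ Δ := by exact_mod_cast hΔ3
  have hlogΔ : 0 < Real.log Δ := Real.log_pos hΔ1
  have hloglog : Real.log Δ ≤ Real.log n := Real.log_le_log hΔ0 (by exact_mod_cast hΔn)
  have ht1 : 1 ≤ t := by rw [ht]; exact (one_le_div hlogΔ).2 hloglog
  have htk : t ≤ k := Nat.le_ceil t
  have h1 : (N.choose k : ℝ) ≤ (Δ : ℝ) ^ (5 * k) := by
    have hNk : (N : ℝ) ≤ (k : ℝ) * (Δ : ℝ) ^ 4 := by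
      refine hN.trans ?_
      have h4 : (0:ℝ) ≤ (Δ:ℝ)^4 := by positivity
      nlinarith
    have hexp : Real.exp 1 ^ k ≤ (Δ : ℝ) ^ k := by
      have := Real.exp_one_lt_d9
      exact pow_le_pow_left₀ (Real.exp_pos 1).le (by linarith) k
    calc (N.choose k : ℝ) ≤ (N : ℝ) ^ k / (k.factorial : ℝ) := Nat.choose_le_pow_div k N
      _ ≤ ((k : ℝ) * (Δ : ℝ) ^ 4) ^ k / (k.factorial : ℝ) := by gcongr
      _ = ((k:ℝ)^k / (k.factorial : ℝ)) * ((Δ:ℝ)^4)^k := by rw [mul_pow]; ring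
      _ ≤ Real.exp k * ((Δ:ℝ)^4)^k := by
          gcongr ?_ * _
          exact Real.pow_div_factorial_le_exp (k:ℝ) (Nat.cast_nonneg k) k
      _ = Real.exp 1 ^ k * ((Δ:ℝ)^4)^k := by rw [← Real.exp_nat_mul]; norm_num
      _ ≤ (Δ:ℝ)^k * ((Δ:ℝ)^4)^k := by
          exact mul_le_mul_of_nonneg_right hexp (by positivity)
      _ = (Δ : ℝ) ^ (5 * k) := by rw [← pow_mul, ← pow_add]; ring_nf
  have h2 : (N.choose k : ℝ) * (Δ : ℝ) ^ (-c * (k : ℝ)) ≤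
      (Δ : ℝ) ^ ((5 - c) * (k:ℝ)) := by
    calc (N.choose k : ℝ) * (Δ : ℝ) ^ (-c * (k : ℝ))
        ≤ (Δ : ℝ) ^ (5 * k) * (Δ : ℝ) ^ (-c * (k : ℝ)) :=
          mul_le_mul_of_nonneg_right h1 (Real.rpow_pos_of_pos hΔ0 _).le
      _ = (Δ : ℝ) ^ ((5*k : ℕ) : ℝ) * (Δ : ℝ) ^ (-c * (k : ℝ)) := by
          rw [Real.rpow_natCast]
      _ = (Δ : ℝ) ^ (((5*k : ℕ) : ℝ) + (-c * (k : ℝ))) := (Real.rpow_add hΔ0 _ _).symm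
      _ = (Δ : ℝ) ^ ((5 - c) * (k:ℝ)) := by
          congr 1; push_cast; ring
  refine h2.trans ?_
  have h3 : (Δ : ℝ) ^ ((5 - c) * (k:ℝ)) ≤ (Δ : ℝ) ^ ((5 - c) * t) := by
    apply Real.rpow_le_rpow_of_exponent_le hΔ1.le
    have h5c : 5 - c ≤ 0 := by linarith
    nlinarith
  refine h3.trans ?_
  have hn0 : (0:ℝ) < n := by positivity
  have htl : t * Real.log Δ = Real.log n := by
    rw [ht, div_mul_cancel₀ _ hlogΔ.ne']
  rw [Real.rpow_def_of_pos hΔ0, Real.rpow_def_of_pos hn0]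
  apply le_of_eq
  congr 1
  rw [← htl]
  ring

/-- **Second-phase shattering.** Let `n ≥ 3`, `3 ≤ Δ ≤ n`, `t = log n / log Δ`, `c ≥ 5`.
If `H` is a graph with at most `t·Δ⁴` vertices and `B` is a random subset such that every
`5`-independent set `U` satisfies `P(U ⊆ B) ≤ Δ^(-c·|U|)`, then the probability that some
`5`-independent set `U ⊆ B` with `|U| ≥ t` exists is at most `n^(5-c)`. -/
theorem second_phase_shattering
    {V Ω : Type*} [Fintype V] [MeasureSpace Ω] [IsProbabilityMeasure (ℙ : Measure Ω)]
    (H : SimpleGraph V)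
    (n Δ : ℕ) (hn : 3 ≤ n) (hΔ3 : 3 ≤ Δ) (hΔn : Δ ≤ n)
    (t : ℝ) (ht : t = Real.log n / Real.log Δ)
    (c : ℝ) (hc : 5 ≤ c)
    (hsize : (Fintype.card V : ℝ) ≤ t * (Δ : ℝ) ^ 4)
    (B : Ω → Set V)
    (hmeas : ∀ U : Finset V, MeasurableSet {ω | (U : Set V) ⊆ B ω})
    (hB : ∀ U : Finset V, Indep H 5 (U : Set V) →
      ℙ {ω | (U : Set V) ⊆ B ω} ≤ ENNReal.ofReal ((Δ : ℝ) ^ (-c * (U.card : ℝ)))) :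
    ℙ {ω | ∃ U : Finset V, (U : Set V) ⊆ B ω ∧ Indep H 5 (U : Set V) ∧ t ≤ (U.card : ℝ)}
      ≤ ENNReal.ofReal ((n : ℝ) ^ (5 - c)) := by
  classical
  set k := ⌈t⌉₊ with hk
  set S : Finset (Finset V) :=
    (Finset.univ.powersetCard k).filter (fun U => Indep H 5 (U : Set V)) with hS
  have hsub : {ω | ∃ U : Finset V, (U : Set V) ⊆ B ω ∧ Indep H 5 (U : Set V) ∧ t ≤ (U.card : ℝ)}
      ⊆ ⋃ U ∈ S, {ω | (U : Set V) ⊆ B ω} := by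
    rintro ω ⟨U, hUB, hUI, hUt⟩
    have hkU : k ≤ U.card := Nat.ceil_le.2 hUt
    obtain ⟨W, hWU, hWcard⟩ := Finset.exists_subset_card_eq hkU
    have hWS : W ∈ S := by
      rw [hS, Finset.mem_filter, Finset.mem_powersetCard]
      refine ⟨⟨Finset.subset_univ W, hWcard⟩, ?_⟩
      intro u hu v hv huv
      exact hUI u (Finset.coe_subset.2 hWU hu) v (Finset.coe_subset.2 hWU hv) huv
    exact Set.mem_biUnion hWS (Set.Subset.trans (Finset.coe_subset.2 hWU) hUB)
  refine (measure_mono hsub).trans ?_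
  refine (measure_biUnion_finset_le S _).trans ?_
  have hstep : ∀ U ∈ S, ℙ {ω | (U : Set V) ⊆ B ω}
      ≤ ENNReal.ofReal ((Δ : ℝ) ^ (-c * (k : ℝ))) := by
    intro U hU
    rw [hS, Finset.mem_filter, Finset.mem_powersetCard] at hU
    obtain ⟨⟨-, hcard⟩, hind⟩ := hU
    have := hB U hind
    rwa [hcard] at this
  refine (Finset.sum_le_sum hstep).trans ?_
  rw [Finset.sum_const, nsmul_eq_mul]
  have hcount : S.card ≤ (Fintype.card V).choose k := by
    calc S.card ≤ (Finset.univ.powersetCard k : Finset (Finset V)).card :=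
          Finset.card_filter_le _ _
      _ = (Fintype.card V).choose k := by
          rw [Finset.card_powersetCard, Finset.card_univ]
  have hx : (0:ℝ) ≤ (S.card : ℝ) := Nat.cast_nonneg _
  calc (S.card : ℝ≥0∞) * ENNReal.ofReal ((Δ : ℝ) ^ (-c * (k : ℝ)))
      = ENNReal.ofReal ((S.card : ℝ) * (Δ : ℝ) ^ (-c * (k : ℝ))) := by
        rw [ENNReal.ofReal_mul hx, ENNReal.ofReal_natCast]
    _ ≤ ENNReal.ofReal ((n : ℝ) ^ (5 - c)) := by
        apply ENNReal.ofReal_le_ofReal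
        refine le_trans ?_ (key_real n Δ (Fintype.card V) t c hn hΔ3 hΔn ht hc hsize)
        have : (0:ℝ) ≤ (Δ : ℝ) ^ (-c * (k : ℝ)) :=
          (Real.rpow_pos_of_pos (by positivity) _).le
        exact mul_le_mul_of_nonneg_right (by exact_mod_cast hcount) this
end

section
/- Let H be a finite simple graph, let α, s ≥ 1 be integers and let β ≥ α−1 be an integer. Let U be a nonempty s-connected set of vertices of H, and let R ⊆ U be an (α,β)-ruling set of U with respect to distances in H. Then R is α-independent in H and (s+2β)-connected in H. -/
open scoped ENNReal

lemma sdist_le_iff {V : Type*} (G : SimpleGraph V) (A B : Set V) (n : ℕ) :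
    sdist G A B ≤ (n : ℕ∞) ↔ ∃ a ∈ A, ∃ b ∈ B, G.edist a b ≤ (n : ℕ∞) := by
  constructor
  · intro h
    by_contra hc
    push_neg at hc
    have h2 : ((n : ℕ∞) + 1) ≤ sdist G A B := by
      apply le_iInf₂; intro a ha
      apply le_iInf₂; intro b hb
      exact Order.add_one_le_of_lt (hc a ha b hb)
    have := le_trans h2 h
    simp [ENat.add_one_le_iff] at this
  · rintro ⟨a, ha, b, hb, hab⟩
    calc sdist G A B ≤ G.edist a b := by
          exact le_trans (iInf₂_le a ha) (iInf₂_le b hb)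
      _ ≤ (n : ℕ∞) := hab

/-- **Ruling set of an `s`-connected component.** If `U` is a nonempty `s`-connected set of
vertices of `H` and `R ⊆ U` is an `(α,β)`-ruling set of `U` with respect to distances in `H`
(`α, s ≥ 1` and `β ≥ α - 1`), then `R` is `α`-independent and `(s + 2β)`-connected in `H`. -/
theorem rulingSet_connected {V : Type*} [Fintype V] (H : SimpleGraph V)
    (α s β : ℕ) (hα : 1 ≤ α) (hs : 1 ≤ s) (hβ : α ≤ β + 1)
    (U : Set V) (hUne : U.Nonempty) (hUconn : sConnected H s U)
    (R : Set V) (hRU : R ⊆ U)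
    (hRind : Indep H α R)
    (hRdom : ∀ u ∈ U, ∃ r ∈ R, H.edist u r ≤ (β : ℕ∞)) :
    Indep H α R ∧ sConnected H (s + 2 * β) R := by
  refine ⟨hRind, ?_⟩
  intro R' hR'R hR'ne hR'neq
  obtain ⟨r₀, hr₀⟩ : (R \ R').Nonempty := by
    rw [Set.diff_nonempty]
    exact fun h => hR'neq (le_antisymm hR'R h)
  rw [sdist_le_iff]
  by_cases hcase : ∃ r' ∈ R', ∃ r ∈ R \ R', H.edist r' r ≤ (β : ℕ∞)
  · obtain ⟨r', hr', r, hr, hd⟩ := hcase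
    refine ⟨r', hr', r, hr, le_trans hd ?_⟩
    exact_mod_cast Nat.cast_le.mpr (by omega : β ≤ s + 2 * β)
  · push_neg at hcase
    set U' : Set V := {u | u ∈ U ∧ ∃ r' ∈ R', H.edist u r' ≤ (β : ℕ∞)} with hU'def
    have hU'U : U' ⊆ U := fun u hu => hu.1
    have hR'U' : R' ⊆ U' := by
      intro r' hr'
      exact ⟨hRU (hR'R hr'), r', hr', by simp [SimpleGraph.edist_self]⟩
    have hr₀notU' : r₀ ∉ U' := by
      rintro ⟨-, r', hr', hd⟩
      have := hcase r' hr' r₀ hr₀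
      rw [SimpleGraph.edist_comm] at hd
      exact absurd hd (not_le_of_gt this)
    have hU'ne : U' ≠ U := fun h => hr₀notU' (h ▸ hRU hr₀.1)
    have hconn := hUconn U' hU'U (hR'ne.mono hR'U') hU'ne
    rw [sdist_le_iff] at hconn
    obtain ⟨u, hu, v, hv, huv⟩ := hconn
    obtain ⟨-, r', hr', hur'⟩ := hu
    obtain ⟨r, hrR, hvr⟩ := hRdom v hv.1
    have hrR' : r ∉ R' := fun h => hv.2 ⟨hv.1, r, h, hvr⟩
    refine ⟨r', hr', r, ⟨hrR, hrR'⟩, ?_⟩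
    calc H.edist r' r ≤ H.edist r' u + H.edist u r := H.edist_triangle
      _ ≤ H.edist r' u + (H.edist u v + H.edist v r) :=
          add_le_add_right H.edist_triangle _
      _ ≤ (β : ℕ∞) + ((s : ℕ∞) + (β : ℕ∞)) := by
          rw [SimpleGraph.edist_comm] at hur'
          exact add_le_add hur' (add_le_add huv hvr)
      _ = ((s + 2 * β : ℕ) : ℕ∞) := by push_cast; ring
end

section
/- Let H be a finite simple graph, let s ≥ 1 be an integer and t ≥ 1 a real number. Let C be an s-connected finite set of vertices of H with |C| ≥ t·B₄, where B₄ := max over v ∈ C of the number of vertices u of H with dist_H(u,v) ≤ 4 (including v itself). Then there exists a subset U ⊆ C that is 5-independent in H, (s+8)-connected in H, and satisfies |U| ≥ t. -/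
open scoped ENNReal

lemma exists_of_sdist_le {V : Type*} (G : SimpleGraph V) (A B : Set V) (n : ℕ)
    (h : sdist G A B ≤ (n : ℕ∞)) : ∃ a ∈ A, ∃ b ∈ B, G.edist a b ≤ (n : ℕ∞) := by
  by_contra hc
  push_neg at hc
  have hlow : (n : ℕ∞) + 1 ≤ sdist G A B := by
    refine le_iInf₂ fun a ha => le_iInf₂ fun b hb => ?_
    exact Order.add_one_le_of_lt (hc a ha b hb)
  have : (n : ℕ∞) + 1 ≤ (n : ℕ∞) := hlow.trans h
  have : (n : ℕ) + 1 ≤ n := by exact_mod_cast this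
  omega

lemma sdist_le_edist {V : Type*} (G : SimpleGraph V) {A B : Set V} {a b : V}
    (ha : a ∈ A) (hb : b ∈ B) : sdist G A B ≤ G.edist a b := by
  calc sdist G A B ≤ ⨅ b ∈ B, G.edist a b := iInf₂_le a ha
    _ ≤ G.edist a b := iInf₂_le b hb

/-- If `C` is an `s`-connected set with `|C| ≥ t·B₄`, where `B₄` is the maximum over `v ∈ C`
of the number of vertices within distance `4` of `v` (including `v` itself), then there is a
subset `U ⊆ C` that is `5`-independent, `(s+8)`-connected, and has size at least `t`. -/
theorem large_independent_connected_subset {V : Type*} [Fintype V] [DecidableEq V]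
    (H : SimpleGraph V) (s : ℕ) (hs : 1 ≤ s) (t : ℝ) (ht : 1 ≤ t)
    (C : Finset V) (hCne : C.Nonempty) (hCconn : sConnected H s (C : Set V))
    (B4 : ℕ) (hB4 : B4 = C.sup (fun v => Set.ncard {u : V | H.edist u v ≤ (4 : ℕ∞)}))
    (hsize : t * (B4 : ℝ) ≤ (C.card : ℝ)) :
    ∃ U : Finset V, U ⊆ C ∧ Indep H 5 (U : Set V) ∧
      sConnected H (s + 8) (U : Set V) ∧ t ≤ (U.card : ℝ) := by
  classical
  -- choose a maximum-size 5-independent subset of C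
  obtain ⟨U, hUmem, hUmax⟩ :=
    Finset.exists_max_image (C.powerset.filter fun U : Finset V => Indep H 5 (↑U : Set V))
      (fun U => U.card) ⟨∅, by simp [Indep]⟩
  rw [Finset.mem_filter, Finset.mem_powerset] at hUmem
  obtain ⟨hUC, hUindep⟩ := hUmem
  -- every vertex of C is within distance 4 of U
  have hcov : ∀ c ∈ C, ∃ u ∈ U, H.edist c u ≤ (4 : ℕ∞) := by
    intro c hc
    by_cases hcU : c ∈ U
    · exact ⟨c, hcU, by simp [SimpleGraph.edist_self]⟩
    by_contra hno
    push_neg at hno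
    have hins : Indep H 5 ((insert c U : Finset V) : Set V) := by
      intro x hx y hy hxy
      simp only [Finset.coe_insert, Set.mem_insert_iff, Finset.mem_coe] at hx hy
      have key : ∀ u ∈ U, (5 : ℕ∞) ≤ H.edist c u := by
        intro u hu
        have h4 : (4 : ℕ∞) < H.edist c u := hno u hu
        have := Order.add_one_le_of_lt h4
        calc (5 : ℕ∞) = 4 + 1 := by norm_num
          _ ≤ H.edist c u := this
      rcases hx with rfl | hx
      · rcases hy with rfl | hy
        · exact absurd rfl hxy
        · exact key y hy
      · rcases hy with rfl | hy
        · rw [SimpleGraph.edist_comm]; exact key x hx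
        · exact hUindep x hx y hy hxy
    have hmem : insert c U ∈ (C.powerset.filter fun U : Finset V => Indep H 5 (↑U : Set V)) := by
      rw [Finset.mem_filter, Finset.mem_powerset]
      exact ⟨Finset.insert_subset hc hUC, hins⟩
    have := hUmax _ hmem
    rw [Finset.card_insert_of_notMem hcU] at this
    omega
  refine ⟨U, hUC, hUindep, ?_, ?_⟩
  · -- (s+8)-connected
    intro S' hS' hS'ne hS'neq
    obtain ⟨w, hwU, hwS'⟩ : ∃ w ∈ (U : Set V), w ∉ S' := by
      by_contra h
      push_neg at h
      exact hS'neq (hS'.antisymm h)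
    set A : Set V := {c ∈ (C : Set V) | ∃ u' ∈ S', H.edist c u' ≤ (4 : ℕ∞)} with hA
    have hAsub : A ⊆ (C : Set V) := fun x hx => hx.1
    obtain ⟨u₀, hu₀⟩ := hS'ne
    have hAne : A.Nonempty :=
      ⟨u₀, hUC (hS' hu₀), u₀, hu₀, by simp [SimpleGraph.edist_self]⟩
    have hwA : w ∉ A := by
      rintro ⟨-, u', hu'S', hdist⟩
      have hne : w ≠ u' := fun h => hwS' (h ▸ hu'S')
      have := hUindep w hwU u' (hS' hu'S') hne
      have : (5 : ℕ∞) ≤ 4 := this.trans hdist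
      norm_num at this
    have hAneq : A ≠ (C : Set V) := fun h => hwA (h ▸ hUC hwU)
    obtain ⟨a, ha, b, hb, hab⟩ :=
      exists_of_sdist_le H A ((C : Set V) \ A) s (hCconn A hAsub hAne hAneq)
    obtain ⟨haC, u', hu'S', hau'⟩ := ha
    obtain ⟨hbC, hbA⟩ := hb
    obtain ⟨u, huU, hbu⟩ := hcov b hbC
    have huS' : u ∉ S' := fun h => hbA ⟨hbC, u, h, hbu⟩
    have hmem : u ∈ (U : Set V) \ S' := ⟨huU, huS'⟩
    have htri : H.edist u' u ≤ (4 : ℕ∞) + s + 4 := by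
      calc H.edist u' u ≤ H.edist u' b + H.edist b u := SimpleGraph.edist_triangle
        _ ≤ (H.edist u' a + H.edist a b) + H.edist b u :=
            add_le_add_left SimpleGraph.edist_triangle _
        _ ≤ ((4 : ℕ∞) + s) + 4 := by
            refine add_le_add (add_le_add ?_ hab) hbu
            rw [SimpleGraph.edist_comm]; exact hau'
    have heq : (4 : ℕ∞) + s + 4 = ((s + 8 : ℕ) : ℕ∞) := by
      push_cast
      ring
    calc sdist H S' ((U : Set V) \ S') ≤ H.edist u' u := sdist_le_edist H hu'S' hmem
      _ ≤ ((s + 8 : ℕ) : ℕ∞) := heq ▸ htri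
  · -- size bound
    have hball : ∀ v : V, {u : V | H.edist u v ≤ (4 : ℕ∞)}.ncard
        = (Finset.univ.filter fun x => H.edist x v ≤ (4 : ℕ∞)).card := by
      intro v
      rw [← Set.ncard_coe_finset]
      congr 1
      ext x
      simp
    have hcard : C.card ≤ U.card * B4 := by
      have hsub : C ⊆ U.biUnion fun u => Finset.univ.filter fun x => H.edist x u ≤ (4 : ℕ∞) := by
        intro c hc
        obtain ⟨u, hu, hd⟩ := hcov c hc
        rw [Finset.mem_biUnion]
        exact ⟨u, hu, by simpa using hd⟩
      calc C.card ≤ (U.biUnion fun u => Finset.univ.filter fun x => H.edist x u ≤ (4 : ℕ∞)).card :=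
            Finset.card_le_card hsub
        _ ≤ ∑ u ∈ U, (Finset.univ.filter fun x => H.edist x u ≤ (4 : ℕ∞)).card :=
            Finset.card_biUnion_le
        _ ≤ ∑ _u ∈ U, B4 := by
            refine Finset.sum_le_sum fun u hu => ?_
            rw [hB4, ← hball u]
            exact Finset.le_sup (f := fun v => {u : V | H.edist u v ≤ (4 : ℕ∞)}.ncard) (hUC hu)
        _ = U.card * B4 := by rw [Finset.sum_const, smul_eq_mul]
    have hB4pos : 1 ≤ B4 := by
      obtain ⟨v, hv⟩ := hCne
      have h1 : 1 ≤ {u : V | H.edist u v ≤ (4 : ℕ∞)}.ncard := by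
        have : v ∈ {u : V | H.edist u v ≤ (4 : ℕ∞)} := by simp [SimpleGraph.edist_self]
        have := Set.ncard_pos (Set.toFinite _) |>.mpr ⟨v, this⟩
        omega
      calc 1 ≤ _ := h1
        _ ≤ B4 := hB4 ▸ Finset.le_sup (f := fun v => {u : V | H.edist u v ≤ (4 : ℕ∞)}.ncard) hv
    have hB4r : (0 : ℝ) < (B4 : ℝ) := by exact_mod_cast hB4pos
    have h1 : t * (B4 : ℝ) ≤ (U.card : ℝ) * (B4 : ℝ) := by
      refine hsize.trans ?_
      calc ((C.card : ℕ) : ℝ) ≤ ((U.card * B4 : ℕ) : ℝ) := by exact_mod_cast hcard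
        _ = (U.card : ℝ) * (B4 : ℝ) := by push_cast; ring
    exact le_of_mul_le_mul_right h1 hB4r
end

section
/- Let K be a finite simple graph with n vertices and maximum degree at most D, where D ≥ 1, and let t ≥ 1 be an integer. Then the number of t-element vertex subsets U of K such that the induced subgraph K[U] is connected is at most 4^t · n · D^{t−1}. -/
set_option linter.unusedSectionVars false
set_option linter.unusedVariables false

namespace CountConnAux

variable {V : Type*} [Fintype V] [DecidableEq V]

noncomputable def nbr (K : SimpleGraph V) [DecidableRel K.Adj] (u : V) (k : ℕ) : V :=
  (K.neighborFinset u).toList.getD k u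

noncomputable def stepFn (K : SimpleGraph V) [DecidableRel K.Adj] :
    List V × Finset V → Option ℕ → List V × Finset V
  | (s, vis), none => (s.tail, vis)
  | ([], vis), some _ => ([], vis)
  | (u :: rest, vis), some k => (nbr K u k :: u :: rest, insert (nbr K u k) vis)

variable {K : SimpleGraph V} [DecidableRel K.Adj]

lemma stepFn_insert (st : List V × Finset V) (a : V) (o : Option ℕ) :
    stepFn K (st.1, insert a st.2) o = ((stepFn K st o).1, insert a (stepFn K st o).2) := by
  obtain ⟨s, vis⟩ := st
  rcases o with _ | k <;> rcases s with _ | ⟨u, rest⟩ <;>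
    simp [stepFn, Finset.insert_comm]

lemma foldl_insert (l : List (Option ℕ)) :
    ∀ (st : List V × Finset V) (a : V),
    List.foldl (stepFn K) (st.1, insert a st.2) l
      = ((List.foldl (stepFn K) st l).1, insert a (List.foldl (stepFn K) st l).2) := by
  induction l with
  | nil => intro st a; rfl
  | cons o l ih =>
    intro st a
    simp only [List.foldl_cons, stepFn_insert]
    exact ih (stepFn K st o) a

lemma foldl_splice (l1 l2 : List (Option ℕ)) (k : ℕ) (st : List V × Finset V) (w : V) (s : List V)
    (h : (List.foldl (stepFn K) st l1).1 = w :: s) :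
    List.foldl (stepFn K) st (l1 ++ some k :: none :: l2)
      = ((List.foldl (stepFn K) st (l1 ++ l2)).1,
         insert (nbr K w k) (List.foldl (stepFn K) st (l1 ++ l2)).2) := by
  have h2 : List.foldl (stepFn K) st l1 = (w :: s, (List.foldl (stepFn K) st l1).2) := by
    rw [← h]
  rw [List.foldl_append, List.foldl_append, h2, List.foldl_cons, List.foldl_cons]
  have h3 : stepFn K (stepFn K (w :: s, (List.foldl (stepFn K) st l1).2) (some k)) none
      = ((w :: s : List V), insert (nbr K w k) (List.foldl (stepFn K) st l1).2) := rfl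
  rw [h3]
  exact foldl_insert l2 (w :: s, (List.foldl (stepFn K) st l1).2) (nbr K w k)


lemma walk_rtg {s : Set V} {x y : ↥s} (p : (K.induce s).Walk x y) (t : Set V)
    (hsup : ∀ z ∈ p.support, (z : V) ∈ t) :
    Relation.ReflTransGen (fun a b : V => K.Adj a b ∧ a ∈ t ∧ b ∈ t) (x : V) (y : V) := by
  induction p with
  | nil => exact Relation.ReflTransGen.refl
  | @cons a b c h q ih =>
    refine Relation.ReflTransGen.head ⟨?_, ?_, ?_⟩ (ih fun z hz => hsup z (by simp [hz]))
    · exact h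
    · exact hsup a (by simp)
    · exact hsup b (by simp [SimpleGraph.Walk.start_mem_support])

lemma rtg_reach {s : Set V} {x y : V}
    (h : Relation.ReflTransGen (fun a b : V => K.Adj a b ∧ a ∈ s ∧ b ∈ s) x y) :
    ∀ (hx : x ∈ s) (hy : y ∈ s), (K.induce s).Reachable ⟨x, hx⟩ ⟨y, hy⟩ := by
  induction h with
  | refl => intro hx hy; exact SimpleGraph.Reachable.refl _
  | @tail b c hab hbc ih =>
    intro hx hy
    refine (ih hx hbc.2.1).trans (SimpleGraph.Adj.reachable ?_)
    exact hbc.1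


lemma exists_prog (D : ℕ) (hdeg : ∀ v, K.degree v ≤ D) (U : Finset V) :
    (K.induce (U : Set V)).Connected → ∀ r ∈ U, ∃ l : List (Option ℕ),
      l.length = 2 * (U.card - 1) ∧
      (l.filterMap id).length = U.card - 1 ∧
      (∀ k ∈ l.filterMap id, k < D) ∧
      (List.foldl (stepFn K) ([r], {r}) l).2 = U ∧
      (∀ x ∈ U, ∃ l1 l2 s', l = l1 ++ l2 ∧
         (List.foldl (stepFn K) ([r], {r}) l1).1 = x :: s') := by
  induction U using Finset.strongInduction with
  | _ U ih =>
  intro hconn r hr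
  by_cases hcard : U.card ≤ 1
  · have h1 : U.card = 1 := le_antisymm hcard (Finset.card_pos.mpr ⟨r, hr⟩)
    obtain ⟨a, ha⟩ := Finset.card_eq_one.mp h1
    have har : a = r := by
      have := hr; rw [ha, Finset.mem_singleton] at this; exact this.symm
    subst har
    refine ⟨[], by simp [h1], by simp [h1], by simp, by simp [ha], ?_⟩
    intro x hx
    rw [ha, Finset.mem_singleton] at hx
    subst hx
    exact ⟨[], [], [], rfl, rfl⟩
  · push_neg at hcard
    set G' := K.induce (U : Set V) with hG'
    have hr' : r ∈ (U : Set V) := Finset.mem_coe.mpr hr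
    set r' : ↥(U : Set V) := ⟨r, hr'⟩ with hr'def
    obtain ⟨u', -, hmax⟩ := Finset.exists_max_image Finset.univ
      (fun z => G'.dist r' z) ⟨r', Finset.mem_univ r'⟩
    obtain ⟨x0, hx0U, hx0r⟩ := Finset.exists_mem_ne hcard r
    have hx0 : (⟨x0, Finset.mem_coe.mpr hx0U⟩ : ↥(U : Set V)) ≠ r' := by
      intro h
      exact hx0r (congrArg Subtype.val h)
    have hupos : 0 < G'.dist r' u' := by
      calc 0 < G'.dist r' ⟨x0, Finset.mem_coe.mpr hx0U⟩ :=
              hconn.pos_dist_of_ne (Ne.symm hx0)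
        _ ≤ G'.dist r' u' := hmax _ (Finset.mem_univ _)
    have hur : u' ≠ r' := by
      intro h
      rw [h, SimpleGraph.dist_self] at hupos
      omega
    obtain ⟨p, hp⟩ := hconn.exists_walk_length_eq_dist r' u'
    have hrev : ¬ p.reverse.Nil := SimpleGraph.Walk.not_nil_of_ne hur
    obtain ⟨w', hadj, q0, hq0⟩ := SimpleGraph.Walk.not_nil_iff.mp hrev
    set u : V := (u' : V) with hu
    set w : V := (w' : V) with hw
    have hKuw : K.Adj u w := hadj
    have hKwu : K.Adj w u := hKuw.symm
    have hwu : w ≠ u := fun h => hadj.ne (Subtype.ext h.symm)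
    have hru : r ≠ u := fun h => hur (Subtype.ext h.symm)
    have huU : u ∈ U := Finset.mem_coe.mp u'.2
    set U' : Finset V := U.erase u with hU'
    have hwU' : w ∈ U' := Finset.mem_erase.mpr ⟨hwu, Finset.mem_coe.mp w'.2⟩
    have hrU' : r ∈ U' := Finset.mem_erase.mpr ⟨hru, hr⟩
    have hreach : ∀ x (hx : x ∈ U'),
        (K.induce (U' : Set V)).Reachable ⟨r, Finset.mem_coe.mpr hrU'⟩
          ⟨x, Finset.mem_coe.mpr hx⟩ := by
      intro x hx
      have hxU : x ∈ U := (Finset.mem_erase.mp hx).2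
      have hxu : x ≠ u := (Finset.mem_erase.mp hx).1
      set x' : ↥(U : Set V) := ⟨x, Finset.mem_coe.mpr hxU⟩ with hx'def
      obtain ⟨q, hq⟩ := hconn.exists_walk_length_eq_dist r' x'
      have hnu : ∀ z ∈ q.support, (z : V) ∈ (U' : Set V) := by
        intro z hz
        have hzU : (z : V) ∈ U := Finset.mem_coe.mp z.2
        have hzu : z ≠ u' := by
          intro h
          subst h
          have h1 := SimpleGraph.Walk.take_spec q hz
          have hl : (q.takeUntil _ hz).length + (q.dropUntil _ hz).length = q.length := by
            rw [← SimpleGraph.Walk.length_append, h1]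
          have d1 : G'.dist r' z ≤ (q.takeUntil _ hz).length := SimpleGraph.dist_le _
          have d2 : G'.dist z x' ≤ (q.dropUntil _ hz).length := SimpleGraph.dist_le _
          have d3 : G'.dist r' x' ≤ G'.dist r' z := hmax _ (Finset.mem_univ _)
          have d0 : G'.dist z x' = 0 := by omega
          have := hconn.dist_eq_zero_iff.mp d0
          exact hxu (congrArg Subtype.val this).symm
        exact Finset.mem_coe.mpr
          (Finset.mem_erase.mpr ⟨fun h => hzu (Subtype.ext h), hzU⟩)
      have hr1 := walk_rtg q (U' : Set V) hnu
      exact rtg_reach hr1 _ _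
    have hconn' : (K.induce (U' : Set V)).Connected := by
      rw [SimpleGraph.connected_iff]
      refine ⟨?_, ⟨⟨r, Finset.mem_coe.mpr hrU'⟩⟩⟩
      rintro ⟨a, ha⟩ ⟨b, hb⟩
      exact ((hreach a (Finset.mem_coe.mp ha)).symm).trans (hreach b (Finset.mem_coe.mp hb))
    have hss : U' ⊂ U := Finset.erase_ssubset huU
    obtain ⟨l, hlen, hflen, hbdd, hfold, hinv⟩ := ih U' hss hconn' r hrU'
    have hcard' : U'.card = U.card - 1 := Finset.card_erase_of_mem huU
    have huw : u ∈ (K.neighborFinset w).toList :=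
      Finset.mem_toList.mpr ((SimpleGraph.mem_neighborFinset K w u).mpr hKwu)
    obtain ⟨i, hi, hieq⟩ := List.mem_iff_getElem.mp huw
    have hiD : i < D := by
      have h2 : (K.neighborFinset w).toList.length = K.degree w := by
        rw [Finset.length_toList]; rfl
      have := hdeg w
      omega
    have hnbr : nbr K w i = u := by
      rw [nbr, List.getD_eq_getElem _ _ hi, hieq]
    obtain ⟨l1, l2, s', hsplit, hstack⟩ := hinv w hwU'
    have hL12 : l1.length + l2.length = 2 * (U'.card - 1) := by
      rw [← List.length_append, ← hsplit]; exact hlen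
    refine ⟨l1 ++ some i :: none :: l2, ?_, ?_, ?_, ?_, ?_⟩
    · simp only [List.length_append, List.length_cons]
      omega
    · have hf12 : (l1.filterMap id).length + (l2.filterMap id).length = U'.card - 1 := by
        rw [← List.length_append, ← List.filterMap_append, ← hsplit]; exact hflen
      simp only [List.filterMap_append, List.filterMap_cons, id_eq, List.length_append,
        List.length_cons]
      change (l1.filterMap (fun x => x)).length + (l2.filterMap (fun x => x)).length = _ at hf12
      omega
    · intro k hk
      simp only [List.filterMap_append, List.filterMap_cons, id_eq, List.mem_append,
        List.mem_cons] at hk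
      rcases hk with h | h | h
      · exact hbdd k (by rw [hsplit, List.filterMap_append]; exact List.mem_append_left _ h)
      · omega
      · exact hbdd k (by rw [hsplit, List.filterMap_append]; exact List.mem_append_right _ h)
    · rw [foldl_splice l1 l2 i ([r], {r}) w s' hstack]
      show insert (nbr K w i) (List.foldl (stepFn K) ([r], {r}) (l1 ++ l2)).2 = U
      rw [← hsplit, hnbr, hfold]
      exact Finset.insert_erase huU
    · intro x hx
      by_cases hxu : x = u
      · subst hxu
        refine ⟨l1 ++ [some i], none :: l2, w :: s', by simp, ?_⟩
        rw [List.foldl_append]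
        have h2 : List.foldl (stepFn K) ([r], {r}) l1
            = (w :: s', (List.foldl (stepFn K) ([r], {r}) l1).2) := by rw [← hstack]
        rw [h2]
        simp [stepFn, hnbr]
      · have hxU' : x ∈ U' := Finset.mem_erase.mpr ⟨hxu, hx⟩
        obtain ⟨p1, p2, s2, hps, hpst⟩ := hinv x hxU'
        have heq : l1 ++ l2 = p1 ++ p2 := by rw [← hsplit, ← hps]
        rcases List.append_eq_append_iff.mp heq with ⟨d, hd1, hd2⟩ | ⟨d, hd1, hd2⟩
        · -- p1 = l1 ++ d, l2 = d ++ p2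
          refine ⟨l1 ++ some i :: none :: d, p2, s2, by rw [hd2]; simp, ?_⟩
          rw [foldl_splice l1 d i ([r], {r}) w s' hstack]
          show (List.foldl (stepFn K) ([r], {r}) (l1 ++ d)).1 = x :: s2
          rw [← hd1, hpst]
        · -- l1 = p1 ++ d, p2 = d ++ l2
          exact ⟨p1, d ++ some i :: none :: l2, s2, by rw [hd1]; simp, hpst⟩


def rebuild : List Bool → List ℕ → List (Option ℕ)
  | [], _ => []
  | true :: bs, k :: ks => some k :: rebuild bs ks
  | true :: bs, [] => none :: rebuild bs []
  | false :: bs, ks => none :: rebuild bs ks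

lemma rebuild_spec : ∀ l : List (Option ℕ),
    rebuild (l.map Option.isSome) (l.filterMap id) = l := by
  intro l
  induction l with
  | nil => rfl
  | cons o l ih =>
    rcases o with _ | k
    · simpa [rebuild] using ih
    · simpa [rebuild] using ih

end CountConnAux


open CountConnAux in

/-- **Counting connected subsets.** In a graph `K` on `n` vertices with maximum degree at
most `D ≥ 1`, the number of `t`-element vertex subsets `U` (`t ≥ 1`) inducing a connected
subgraph is at most `4^t · n · D^(t-1)`. -/
theorem count_connected_subsets {V : Type*} [Fintype V] [DecidableEq V]
    (K : SimpleGraph V) [DecidableRel K.Adj]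
    (n D t : ℕ) (hn : Fintype.card V = n) (hD : 1 ≤ D) (ht : 1 ≤ t)
    (hdeg : ∀ v : V, K.degree v ≤ D) :
    Set.ncard {U : Finset V | U.card = t ∧ (K.induce (U : Set V)).Connected}
      ≤ 4 ^ t * n * D ^ (t - 1) := by
  classical
  set m := 2 * (t - 1) with hm
  set Ψ : V × List.Vector Bool m × List.Vector (Fin D) (t - 1) → Finset V :=
    fun z => (List.foldl (stepFn K) ([z.1], {z.1})
      (rebuild z.2.1.toList (z.2.2.toList.map Fin.val))).2 with hΨ
  have hsub : {U : Finset V | U.card = t ∧ (K.induce (U : Set V)).Connected}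
      ⊆ Set.range Ψ := by
    intro U hU
    obtain ⟨hcard, hconn⟩ := hU
    obtain ⟨r0⟩ := hconn.nonempty
    obtain ⟨r, hrU⟩ : ∃ r, r ∈ U := ⟨r0.1, Finset.mem_coe.mp r0.2⟩
    obtain ⟨l, hlen, hflen, hbdd, hfold, -⟩ := exists_prog D hdeg U hconn r hrU
    refine ⟨⟨r, ⟨l.map Option.isSome, by simp [hlen, hcard, hm]⟩,
      ⟨(l.filterMap id).attach.map (fun k => (⟨k.1, hbdd k.1 k.2⟩ : Fin D)),
        by rw [← hcard, ← hflen]; simp⟩⟩, ?_⟩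
    show (List.foldl (stepFn K) ([r], {r})
      (rebuild (l.map Option.isSome)
        (((l.filterMap id).attach.map (fun k => (⟨k.1, hbdd k.1 k.2⟩ : Fin D))).map
          Fin.val))).2 = U
    have hvals : ((l.filterMap id).attach.map
        (fun k => (⟨k.1, hbdd k.1 k.2⟩ : Fin D))).map Fin.val = l.filterMap id := by
      simp [List.map_map, Function.comp]
    rw [hvals, rebuild_spec, hfold]
  have hfin : (Set.range Ψ).Finite := Set.toFinite _
  calc Set.ncard {U : Finset V | U.card = t ∧ (K.induce (U : Set V)).Connected}
      ≤ Set.ncard (Set.range Ψ) := Set.ncard_le_ncard hsub hfin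
    _ ≤ Fintype.card (V × List.Vector Bool m × List.Vector (Fin D) (t - 1)) := by
        rw [← Set.image_univ]
        calc Set.ncard (Ψ '' Set.univ) ≤ Set.ncard (Set.univ : Set (V × List.Vector Bool m × List.Vector (Fin D) (t - 1))) :=
              Set.ncard_image_le Set.finite_univ
          _ = _ := by rw [Set.ncard_univ, Nat.card_eq_fintype_card]
    _ = n * (2 ^ m * D ^ (t - 1)) := by
        simp [Fintype.card_prod, card_vector, hn]
    _ ≤ 4 ^ t * n * D ^ (t - 1) := by
        have h4 : 2 ^ m = 4 ^ (t - 1) := by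
          rw [hm, pow_mul]
          norm_num
        rw [h4]
        have h5 : 4 ^ (t - 1) ≤ 4 ^ t := Nat.pow_le_pow_right (by norm_num) (by omega)
        calc n * (4 ^ (t - 1) * D ^ (t - 1)) ≤ n * (4 ^ t * D ^ (t - 1)) := by
              exact Nat.mul_le_mul_left n (Nat.mul_le_mul_right _ h5)
          _ = 4 ^ t * n * D ^ (t - 1) := by ring
end

section
/- Let n ≥ 3 and i ≥ 1 be integers and let Δ_A > 0 be a real number with 24·2^i·ln n ≤ Δ_A. Let S be a finite index set with |S| ≤ Δ_A / 2^{i−1}, and let (X_w)_{w∈S} be {0,1}-valued random variables, each satisfying P(X_w = 1) = 24·2^i·ln n / Δ_A, that are p-wise independent for some integer p ≥ 8·ln n. Then P( Σ_{w∈S} X_w ≥ 72·ln n ) ≤ n^{−3}. -/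
open MeasureTheory
open scoped ProbabilityTheory ENNReal

lemma aux_integrable_of_bdd {Ω : Type*} [MeasurableSpace Ω] {μ : Measure Ω}
    [IsFiniteMeasure μ] {f : Ω → ℝ} (hf : Measurable f) {C : ℝ} (h : ∀ ω, |f ω| ≤ C) :
    Integrable f μ := by
  refine (integrable_const C).mono' hf.aestronglyMeasurable (ae_of_all _ fun ω => ?_)
  simpa using h ω

lemma aux_integral_prod_of_iIndep {Ω ι : Type*} [MeasurableSpace Ω] {μ : Measure Ω}
    [IsProbabilityMeasure μ] {Z : ι → Ω → ℝ}
    (hind : ProbabilityTheory.iIndepFun Z μ)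
    (hZmeas : ∀ i, Measurable (Z i)) (hZbdd : ∀ i, ∀ ω, |Z i ω| ≤ 1)
    (s : Finset ι) :
    ∫ ω, ∏ i ∈ s, Z i ω ∂μ = ∏ i ∈ s, ∫ ω, Z i ω ∂μ := by
  classical
  induction s using Finset.cons_induction with
  | empty => simp
  | cons i s hi ih =>
    have hprodbdd : ∀ ω, |∏ j ∈ s, Z j ω| ≤ 1 := by
      intro ω
      rw [Finset.abs_prod]
      exact Finset.prod_le_one (fun j _ => abs_nonneg _) (fun j _ => hZbdd j ω)
    have hint1 : Integrable (fun ω => ∏ j ∈ s, Z j ω) μ :=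
      aux_integrable_of_bdd (by exact Finset.measurable_prod _ fun j _ => hZmeas j) hprodbdd
    have hint2 : Integrable (Z i) μ := aux_integrable_of_bdd (hZmeas i) (hZbdd i)
    have hPi : (∏ j ∈ s, Z j) = fun ω => ∏ j ∈ s, Z j ω := by
      funext ω; exact Finset.prod_apply ω s Z
    have hIF : ProbabilityTheory.IndepFun (∏ j ∈ s, Z j) (Z i) μ :=
      hind.indepFun_finsetProd_of_notMem hZmeas hi
    have hmul := hIF.integral_mul_eq_mul_integral (hPi ▸ hint1).aestronglyMeasurable hint2.aestronglyMeasurable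
    calc ∫ ω, ∏ j ∈ Finset.cons i s hi, Z j ω ∂μ
        = ∫ ω, ((∏ j ∈ s, Z j) * Z i) ω ∂μ := by
          congr 1; funext ω; rw [Finset.prod_cons, Pi.mul_apply, Finset.prod_apply, mul_comm]
      _ = (∫ ω, (∏ j ∈ s, Z j) ω ∂μ) * ∫ ω, Z i ω ∂μ := hmul
      _ = (∫ ω, Z i ω ∂μ) * ∏ j ∈ s, ∫ ω, Z j ω ∂μ := by
          rw [mul_comm, ← ih, hPi]
      _ = ∏ j ∈ Finset.cons i s hi, ∫ ω, Z j ω ∂μ := by rw [Finset.prod_cons]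

/-- A family of real random variables is `p`-wise independent if every subfamily of
size at most `p` is mutually independent. -/
def PwiseIndep {Ω ι : Type*} [MeasurableSpace Ω] (μ : Measure Ω) (p : ℕ)
    (X : ι → Ω → ℝ) : Prop :=
  ∀ J : Finset ι, J.card ≤ p →
    ProbabilityTheory.iIndepFun (fun j : J => X j) μ

set_option maxHeartbeats 4000000 in
/-- **Concentration of the number of sampled neighbors.** Let `n ≥ 3`, `i ≥ 1`, and
`Δ_A > 0` a real with `24·2^i·ln n ≤ Δ_A`. If `S` is a finite index set with
`|S| ≤ Δ_A / 2^(i-1)` and `(X_w)_{w∈S}` are `{0,1}`-valued, `p`-wise independent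
(`p ≥ 8·ln n`) random variables with `P(X_w = 1) = 24·2^i·ln n / Δ_A`, then
`P(Σ_w X_w ≥ 72·ln n) ≤ n⁻³`. -/
theorem sampled_neighbors_upper_bound {Ω S : Type*} [MeasureSpace Ω]
    [IsProbabilityMeasure (ℙ : Measure Ω)] [Fintype S]
    (n i : ℕ) (hn : 3 ≤ n) (hi : 1 ≤ i)
    (ΔA : ℝ) (hΔA : 0 < ΔA) (hprob : 24 * 2 ^ i * Real.log n ≤ ΔA)
    (hS : (Fintype.card S : ℝ) ≤ ΔA / 2 ^ (i - 1))
    (X : S → Ω → ℝ)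
    (hmeas : ∀ w, Measurable (X w))
    (hval : ∀ w, ∀ ω, X w ω = 0 ∨ X w ω = 1)
    (hp1 : ∀ w, ℙ {ω | X w ω = 1} = ENNReal.ofReal (24 * 2 ^ i * Real.log n / ΔA))
    (p : ℕ) (hp : 8 * Real.log n ≤ (p : ℝ))
    (hindep : PwiseIndep ℙ p X) :
    ℙ {ω | 72 * Real.log n ≤ ∑ w, X w ω} ≤ ((n : ℝ≥0∞) ^ 3)⁻¹ := by
  classical
  have hn0 : (0:ℝ) < n := by positivity
  have hn3 : (3:ℝ) ≤ n := by exact_mod_cast hn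
  set t : ℝ := Real.log n with ht_def
  have ht1 : 1 < t := by
    rw [ht_def, Real.lt_log_iff_exp_lt hn0]
    calc Real.exp 1 < 2.7182818286 := Real.exp_one_lt_d9
      _ < 3 := by norm_num
      _ ≤ n := hn3
  have ht0 : 0 < t := by linarith
  set q : ℝ := 24 * 2 ^ i * Real.log n / ΔA with hq_def
  have hq0 : 0 < q := by
    apply div_pos _ hΔA
    have : (0:ℝ) < 2 ^ i := by positivity
    nlinarith
  have hq1 : q ≤ 1 := (div_le_one hΔA).2 hprob
  set m : ℕ := Fintype.card S with hm_def
  have hμ : (m:ℝ) * q ≤ 48 * t := by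
    obtain ⟨j, rfl⟩ : ∃ j, i = j + 1 := ⟨i - 1, by omega⟩
    have hj : j + 1 - 1 = j := by omega
    have h2j : (0:ℝ) < 2 ^ j := by positivity
    have heq : (ΔA / 2 ^ j) * q = 48 * t := by
      rw [hq_def, ht_def, pow_succ]
      field_simp
      ring
    have hle := mul_le_mul_of_nonneg_right (hj ▸ hS) hq0.le
    rw [heq] at hle
    exact hle
  set k : ℕ := 2 * Nat.floor (4*t) with hk_def
  have hfl4 : (4:ℕ) ≤ Nat.floor (4*t) := by
    rw [Nat.le_floor_iff (by positivity)]; push_cast; linarith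
  have hk8 : 8 ≤ k := by omega
  have hk0 : 0 < k := by omega
  have hkle : (k:ℝ) ≤ 8 * t := by
    have := Nat.floor_le (show (0:ℝ) ≤ 4*t by positivity)
    rw [hk_def]; push_cast; linarith
  have hkgt : 8 * t - 2 < (k:ℝ) := by
    have := Nat.lt_floor_add_one (4*t)
    rw [hk_def]; push_cast; linarith
  have hkeven : Even k := ⟨Nat.floor (4*t), by omega⟩
  have hkp : k ≤ p := by
    have : (k:ℝ) ≤ (p:ℝ) := le_trans hkle (le_trans hp (le_refl _))
    exact_mod_cast this
  set Y : S → Ω → ℝ := fun w ω => X w ω - q with hY_def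
  have hYmeas : ∀ w, Measurable (Y w) := fun w => (hmeas w).sub measurable_const
  have hYbdd : ∀ w ω, |Y w ω| ≤ 1 := by
    intro w ω
    rcases hval w ω with h | h <;> rw [hY_def] <;> simp only [h] <;>
      rw [abs_le] <;> constructor <;> linarith
  set ν : ℕ → ℝ := fun c => q * (1-q)^c + (1-q) * (-q)^c with hν_def
  have hν0 : ν 0 = 1 := by simp [hν_def]
  have hXint : ∀ w, Integrable (X w) ℙ := by
    intro w
    refine aux_integrable_of_bdd (hmeas w) (C := 1) fun ω => ?_
    rcases hval w ω with h | h <;> simp [h]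
  have hEX : ∀ w, ∫ ω, X w ω = q := by
    intro w
    have hms : MeasurableSet {ω | X w ω = 1} := hmeas w (measurableSet_singleton 1)
    have hind : X w = Set.indicator {ω | X w ω = 1} (fun _ => (1:ℝ)) := by
      funext ω
      rw [Set.indicator_apply]
      rcases hval w ω with h | h
      · rw [if_neg (by simp [Set.mem_setOf_eq, h]), h]
      · rw [if_pos (by simp [Set.mem_setOf_eq, h]), h]
    rw [hind, integral_indicator_const (1:ℝ) hms, measureReal_def, hp1 w, smul_eq_mul, mul_one,
      ENNReal.toReal_ofReal hq0.le]
  have hEYc : ∀ w (c : ℕ), ∫ ω, (Y w ω)^c = ν c := by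
    intro w c
    have hpt : (fun ω => (Y w ω)^c) = fun ω => ((1-q)^c - (-q)^c) * X w ω + (-q)^c := by
      funext ω
      rcases hval w ω with h | h <;> rw [hY_def] <;> simp only [h] <;> ring
    rw [hpt, integral_add ((hXint w).const_mul _) (integrable_const _), integral_const_mul _ _,
      hEX w, integral_const, probReal_univ, one_smul, hν_def]
    ring
  set d : (Fin k → S) → S → ℕ := fun f w => (Finset.univ.filter fun j => f j = w).card
    with hd_def
  have hd0 : ∀ (f : Fin k → S) w, w ∉ Finset.univ.image f → d f w = 0 := by
    intro f w hw
    rw [hd_def]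
    simp only [Finset.card_eq_zero, Finset.filter_eq_empty_iff]
    intro j _
    exact fun hj => hw (Finset.mem_image.2 ⟨j, Finset.mem_univ j, hj⟩)
  have hregroup : ∀ (h : S → ℝ) (f : Fin k → S),
      ∏ j : Fin k, h (f j) = ∏ w : S, h w ^ (d f w) := by
    intro h f
    rw [Finset.prod_comp h f]
    refine Finset.prod_subset (Finset.subset_univ _) fun w _ hw => ?_
    convert pow_zero (h w) using 2
    exact hd0 f w hw
  have hfact : ∀ f : Fin k → S,
      ∫ ω, ∏ j : Fin k, Y (f j) ω = ∏ w : S, ν (d f w) := by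
    intro f
    set J : Finset S := Finset.univ.image f with hJ_def
    have hJcard : J.card ≤ p := by
      calc J.card ≤ (Finset.univ : Finset (Fin k)).card := Finset.card_image_le
        _ = k := by simp
        _ ≤ p := hkp
    have hind' := hindep J hJcard
    have hZind : ProbabilityTheory.iIndepFun
        (fun j : J => fun ω => (X (j:S) ω - q) ^ (d f (j:S))) ℙ := by
      have := hind'.comp (fun (j : J) (x : ℝ) => (x - q) ^ (d f (j:S)))
        (fun j => (measurable_id.sub_const q).pow_const _)
      exact this
    have key := aux_integral_prod_of_iIndep hZind
      (fun j => ((hmeas _).sub_const q).pow_const _)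
      (fun j ω => by
        rw [abs_pow]
        exact pow_le_one₀ (abs_nonneg _) (hYbdd _ ω)) Finset.univ
    calc ∫ ω, ∏ j : Fin k, Y (f j) ω
        = ∫ ω, ∏ j : J, (Y (j:S) ω) ^ (d f (j:S)) := by
          congr 1; funext ω
          rw [Finset.prod_coe_sort J (fun w => (Y w ω) ^ (d f w))]
          exact Finset.prod_comp (fun w => Y w ω) f
      _ = ∏ j : J, ∫ ω, (Y (j:S) ω) ^ (d f (j:S)) := key
      _ = ∏ j : J, ν (d f (j:S)) := Finset.prod_congr rfl fun j _ => hEYc _ _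
      _ = ∏ w ∈ J, ν (d f w) := Finset.prod_coe_sort J (fun w => ν (d f w))
      _ = ∏ w : S, ν (d f w) := by
          refine Finset.prod_subset (Finset.subset_univ _) fun w _ hw => ?_
          rw [hd0 f w hw, hν0]
  set F : Finset (Fin k → S) := Fintype.piFinset (fun _ : Fin k => (Finset.univ : Finset S))
    with hF_def
  have hexp : ∫ ω, (∑ w, Y w ω)^k = ∑ f ∈ F, ∏ w : S, ν (d f w) := by
    calc ∫ ω, (∑ w, Y w ω)^k
        = ∫ ω, ∑ f ∈ F, ∏ j : Fin k, Y (f j) ω := by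
          congr 1; funext ω
          rw [hF_def]
          exact Finset.sum_pow' Finset.univ (fun w => Y w ω) k
      _ = ∑ f ∈ F, ∫ ω, ∏ j : Fin k, Y (f j) ω := by
          refine integral_finset_sum F fun f _ => ?_
          refine aux_integrable_of_bdd
            (Finset.measurable_prod _ fun j _ => hYmeas _) (C := 1) fun ω => ?_
          rw [Finset.abs_prod]
          exact Finset.prod_le_one (fun _ _ => abs_nonneg _) (fun j _ => hYbdd _ ω)
      _ = ∑ f ∈ F, ∏ w : S, ν (d f w) := Finset.sum_congr rfl fun f _ => hfact f
  set B : Bool → ℝ := fun b => if b then q else 1 - q with hB_def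
  set V : Bool → ℝ := fun b => if b then 1 - q else -q with hV_def
  set G : Finset (S → Bool) := Fintype.piFinset (fun _ : S => (Finset.univ : Finset Bool))
    with hG_def
  have hmodel : (∑ f ∈ F, ∏ w : S, ν (d f w))
      = ∑ g ∈ G, (∏ w : S, B (g w)) * (∑ w : S, V (g w))^k := by
    calc ∑ f ∈ F, ∏ w : S, ν (d f w)
        = ∑ f ∈ F, ∏ w : S, ∑ b : Bool, B b * V b ^ (d f w) := by
          refine Finset.sum_congr rfl fun f _ => Finset.prod_congr rfl fun w _ => ?_
          rw [Fintype.sum_bool]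
          simp only [hν_def, hB_def, hV_def]
          norm_num
      _ = ∑ f ∈ F, ∑ g ∈ G, ∏ w : S, (B (g w) * V (g w) ^ (d f w)) := by
          refine Finset.sum_congr rfl fun f _ => ?_
          rw [hG_def]
          exact (Finset.sum_prod_piFinset Finset.univ
            (fun w b => B b * V b ^ (d f w))).symm
      _ = ∑ g ∈ G, ∑ f ∈ F, ∏ w : S, (B (g w) * V (g w) ^ (d f w)) := Finset.sum_comm
      _ = ∑ g ∈ G, (∏ w : S, B (g w)) * (∑ w : S, V (g w))^k := by
          refine Finset.sum_congr rfl fun g _ => ?_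
          calc ∑ f ∈ F, ∏ w : S, (B (g w) * V (g w) ^ (d f w))
              = ∑ f ∈ F, (∏ w : S, B (g w)) * ∏ w : S, V (g w) ^ (d f w) :=
                Finset.sum_congr rfl fun f _ => Finset.prod_mul_distrib
            _ = (∏ w : S, B (g w)) * ∑ f ∈ F, ∏ w : S, V (g w) ^ (d f w) :=
                (Finset.mul_sum _ _ _).symm
            _ = (∏ w : S, B (g w)) * (∑ w : S, V (g w))^k := by
                congr 1
                rw [show ((∑ w : S, V (g w))^k) = ∑ f ∈ F, ∏ j : Fin k, V (g (f j)) by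
                  rw [hF_def]; exact Finset.sum_pow' Finset.univ (fun w => V (g w)) k]
                exact Finset.sum_congr rfl fun f _ =>
                  (hregroup (fun w => V (g w)) f).symm
  set L : ℝ := 0.34 with hL_def
  have hL0 : (0:ℝ) < L := by norm_num [hL_def]
  set c0 : ℝ := (k:ℝ) / (Real.exp 1 * L) with hc0_def
  have hc00 : 0 ≤ c0 := by positivity
  have hzbound : ∀ z : ℝ,
      z ^ k ≤ c0 ^ k * (Real.exp (L*z) + Real.exp (-(L*z))) := by
    intro z
    have hk0' : (0:ℝ) < k := by exact_mod_cast hk0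
    have habs : z^k = |z|^k := (hkeven.pow_abs z).symm
    set u : ℝ := L * |z| with hu_def
    have hu0 : 0 ≤ u := by positivity
    have hv : u/k ≤ Real.exp (u/k - 1) := by
      have := Real.add_one_le_exp (u/k - 1); linarith
    have hpow : (u/k)^k ≤ Real.exp (u - k) := by
      calc (u/k)^k ≤ (Real.exp (u/k - 1))^k := pow_le_pow_left₀ (by positivity) hv k
        _ = Real.exp ((k:ℝ) * (u/k - 1)) := by rw [← Real.exp_nat_mul]
        _ = Real.exp (u - k) := by congr 1; field_simp
    have hzk : |z|^k ≤ ((k:ℝ)/L)^k * Real.exp (u - k) := by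
      have h1 : |z|^k = ((k:ℝ)/L)^k * (u/k)^k := by
        rw [← mul_pow]; congr 1; rw [hu_def]; field_simp
      rw [h1]
      exact mul_le_mul_of_nonneg_left hpow (by positivity)
    have hek : Real.exp ((k:ℝ)) = (Real.exp 1)^k := by rw [← Real.exp_nat_mul, mul_one]
    have hsplit : ((k:ℝ)/L)^k * Real.exp (u - k) = c0^k * Real.exp u := by
      rw [Real.exp_sub, hek, hc0_def, div_pow, div_pow, mul_pow]
      have h1 : (0:ℝ) < Real.exp 1 := Real.exp_pos 1
      field_simp
    have hexpu : Real.exp u ≤ Real.exp (L*z) + Real.exp (-(L*z)) := by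
      rcases le_or_gt 0 z with hz | hz
      · rw [hu_def, abs_of_nonneg hz]
        exact le_add_of_nonneg_right (Real.exp_pos _).le
      · rw [hu_def, abs_of_neg hz, show L * -z = -(L*z) by ring]
        exact le_add_of_nonneg_left (Real.exp_pos _).le
    calc z^k = |z|^k := habs
      _ ≤ ((k:ℝ)/L)^k * Real.exp (u - k) := hzk
      _ = c0^k * Real.exp u := hsplit
      _ ≤ c0^k * (Real.exp (L*z) + Real.exp (-(L*z))) :=
          mul_le_mul_of_nonneg_left hexpu (by positivity)
  have hBnn : ∀ b, 0 ≤ B b := by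
    intro b; rw [hB_def]; cases b <;> simp <;> linarith
  have hmgf : ∀ s : ℝ, Real.exp s - 1 - s ≤ 0.065 →
      ∑ g ∈ G, (∏ w : S, B (g w)) * Real.exp (s * ∑ w : S, V (g w))
        ≤ Real.exp (48 * t * 0.065) := by
    intro s hφ
    have key : ∀ b : Bool, (0:ℝ) ≤ B b * Real.exp (s * V b) :=
      fun b => mul_nonneg (hBnn b) (Real.exp_pos _).le
    calc ∑ g ∈ G, (∏ w : S, B (g w)) * Real.exp (s * ∑ w : S, V (g w))
        = ∑ g ∈ G, ∏ w : S, (B (g w) * Real.exp (s * V (g w))) := by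
          refine Finset.sum_congr rfl fun g _ => ?_
          rw [Finset.mul_sum, Real.exp_sum, ← Finset.prod_mul_distrib]
      _ = ∏ w : S, ∑ b : Bool, B b * Real.exp (s * V b) := by
          rw [hG_def]
          exact Finset.sum_prod_piFinset Finset.univ (fun w b => B b * Real.exp (s * V b))
      _ ≤ ∏ w : S, Real.exp (q * 0.065) := by
          refine Finset.prod_le_prod (fun w _ => Finset.sum_nonneg fun b _ => key b)
            (fun w _ => ?_)
          rw [Fintype.sum_bool]
          have hBt : B true = q := by simp [hB_def]
          have hBf : B false = 1 - q := by simp [hB_def]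
          have hVt : V true = 1 - q := by simp [hV_def]
          have hVf : V false = -q := by simp [hV_def]
          rw [hBt, hBf, hVt, hVf]
          have h1 : s * (1-q) = s + -(s*q) := by ring
          have h2 : s * -q = -(s*q) := by ring
          rw [h1, h2, Real.exp_add]
          have h3 : q * (Real.exp s * Real.exp (-(s*q))) + (1-q) * Real.exp (-(s*q))
              = Real.exp (-(s*q)) * (1 + q * (Real.exp s - 1)) := by ring
          rw [h3]
          have h4 : 1 + q * (Real.exp s - 1) ≤ Real.exp (q * (Real.exp s - 1)) := by
            have := Real.add_one_le_exp (q * (Real.exp s - 1)); linarith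
          calc Real.exp (-(s*q)) * (1 + q * (Real.exp s - 1))
              ≤ Real.exp (-(s*q)) * Real.exp (q * (Real.exp s - 1)) :=
                mul_le_mul_of_nonneg_left h4 (Real.exp_pos _).le
            _ = Real.exp (q * (Real.exp s - 1 - s)) := by
                rw [← Real.exp_add]; congr 1; ring
            _ ≤ Real.exp (q * 0.065) := by
                exact Real.exp_le_exp.2 (mul_le_mul_of_nonneg_left hφ hq0.le)
      _ = Real.exp ((m:ℝ) * (q * 0.065)) := by
          rw [Finset.prod_const, Finset.card_univ, ← hm_def, ← Real.exp_nat_mul]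
      _ ≤ Real.exp (48 * t * 0.065) := by
          apply Real.exp_le_exp.2
          nlinarith [hμ]
  have hphiL : Real.exp L - 1 - L ≤ 0.065 := by
    have h5 := Real.exp_bound' (x := 0.34) (by norm_num) (by norm_num) (n := 5) (by norm_num)
    have hsum : Real.exp (0.34:ℝ) ≤ 1.405 := by
      refine le_trans h5 ?_
      norm_num [Finset.sum_range_succ, Nat.factorial]
    rw [hL_def]
    norm_num
    linarith
  have hphimL : Real.exp (-L) - 1 - (-L) ≤ 0.065 := by
    have hlow : (1.3978 : ℝ) ≤ Real.exp 0.34 := by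
      have h3 := Real.sum_le_exp_of_nonneg (x := (0.34:ℝ)) (by norm_num) 3
      refine le_trans ?_ h3
      norm_num [Finset.sum_range_succ, Nat.factorial]
    have hinv : Real.exp (-(0.34:ℝ)) ≤ 0.725 := by
      rw [Real.exp_neg]
      rw [inv_le_comm₀ (Real.exp_pos _) (by norm_num)]
      calc (0.725:ℝ)⁻¹ ≤ 1.3978 := by norm_num
        _ ≤ Real.exp 0.34 := hlow
    rw [hL_def]
    norm_num
    linarith [hinv]
  have hMbound : (∑ g ∈ G, (∏ w : S, B (g w)) * (∑ w : S, V (g w))^k)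
      ≤ 2 * c0 ^ k * Real.exp (48 * t * 0.065) := by
    have hW0 : ∀ g : S → Bool, 0 ≤ ∏ w : S, B (g w) :=
      fun g => Finset.prod_nonneg fun w _ => hBnn _
    calc ∑ g ∈ G, (∏ w : S, B (g w)) * (∑ w : S, V (g w))^k
        ≤ ∑ g ∈ G, (∏ w : S, B (g w)) *
            (c0^k * (Real.exp (L * ∑ w : S, V (g w)) + Real.exp ((-L) * ∑ w : S, V (g w)))) := by
          refine Finset.sum_le_sum fun g _ => ?_
          refine mul_le_mul_of_nonneg_left ?_ (hW0 g)
          have := hzbound (∑ w : S, V (g w))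
          rw [show (-L) * ∑ w : S, V (g w) = -(L * ∑ w : S, V (g w)) by ring]
          exact this
      _ = c0^k * ((∑ g ∈ G, (∏ w : S, B (g w)) * Real.exp (L * ∑ w : S, V (g w)))
            + (∑ g ∈ G, (∏ w : S, B (g w)) * Real.exp ((-L) * ∑ w : S, V (g w)))) := by
          rw [← Finset.sum_add_distrib, Finset.mul_sum]
          exact Finset.sum_congr rfl fun g _ => by ring
      _ ≤ c0^k * (Real.exp (48 * t * 0.065) + Real.exp (48 * t * 0.065)) := by
          refine mul_le_mul_of_nonneg_left ?_ (by positivity)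
          have hb1 := hmgf L hphiL
          have hb2 := hmgf (-L) hphimL
          exact add_le_add hb1 hb2
      _ = 2 * c0 ^ k * Real.exp (48 * t * 0.065) := by ring
  set A : ℝ := 24 * t with hA_def
  have hA0 : 0 < A := by rw [hA_def]; linarith
  have hGint : Integrable (fun ω => (∑ w, Y w ω)^k) ℙ := by
    refine aux_integrable_of_bdd ?_ (C := (m:ℝ)^k) fun ω => ?_
    · exact (Finset.measurable_sum _ fun w _ => hYmeas w).pow_const k
    · rw [abs_pow]
      apply pow_le_pow_left₀ (abs_nonneg _)
      calc |∑ w, Y w ω| ≤ ∑ w, |Y w ω| := Finset.abs_sum_le_sum_abs _ _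
        _ ≤ ∑ _w : S, 1 := Finset.sum_le_sum fun w _ => hYbdd w ω
        _ = (m:ℝ) := by rw [Finset.sum_const, Finset.card_univ, hm_def]; simp
  have hMarkov : (ℙ {ω | 72 * Real.log n ≤ ∑ w, X w ω}).toReal * A^k
      ≤ ∫ ω, (∑ w, Y w ω)^k := by
    have hGnn : 0 ≤ᵐ[ℙ] fun ω => (∑ w, Y w ω)^k := ae_of_all _ fun ω => hkeven.pow_nonneg _
    have hmark := mul_meas_ge_le_integral_of_nonneg hGnn hGint (A^k)
    have hsub : {ω | 72 * Real.log n ≤ ∑ w, X w ω} ⊆ {ω | A^k ≤ (∑ w, Y w ω)^k} := by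
      intro ω hω
      simp only [Set.mem_setOf_eq] at hω ⊢
      have hYsum : ∑ w, Y w ω = (∑ w, X w ω) - (m:ℝ) * q := by
        simp only [hY_def]
        rw [Finset.sum_sub_distrib, Finset.sum_const, Finset.card_univ, nsmul_eq_mul, hm_def]
      have hge : A ≤ ∑ w, Y w ω := by
        rw [hYsum, hA_def]
        have h72 : 72 * t ≤ ∑ w, X w ω := hω
        linarith [hμ]
      exact pow_le_pow_left₀ hA0.le hge k
    have hm3 : (ℙ {ω | 72 * Real.log n ≤ ∑ w, X w ω}).toReal
        ≤ (ℙ {ω | A^k ≤ (∑ w, Y w ω)^k}).toReal :=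
      ENNReal.toReal_mono (measure_ne_top _ _) (measure_mono hsub)
    calc (ℙ {ω | 72 * Real.log n ≤ ∑ w, X w ω}).toReal * A^k
        ≤ (ℙ {ω | A^k ≤ (∑ w, Y w ω)^k}).toReal * A^k :=
          mul_le_mul_of_nonneg_right hm3 (by positivity)
      _ = A^k * (ℙ {ω | A^k ≤ (∑ w, Y w ω)^k}).toReal := mul_comm _ _
      _ ≤ ∫ ω, (∑ w, Y w ω)^k := hmark
  have hfinal : 2 * c0 ^ k * Real.exp (48 * t * 0.065) ≤ A^k * ((n:ℝ)^3)⁻¹ := by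
    have hexp_n : (n:ℝ) = Real.exp t := (Real.exp_log hn0).symm
    have hn3inv : ((n:ℝ)^3)⁻¹ = Real.exp (-(3*t)) := by
      rw [hexp_n, ← Real.exp_nat_mul, Real.exp_neg]
      norm_num
    have he1 : (0:ℝ) < Real.exp 1 := Real.exp_pos 1
    have h151 : Real.exp ((1:ℝ)/51) ≤ 51/50 := by
      have hb := Real.exp_bound_div_one_sub_of_interval
        (x := (1:ℝ)/51) (by norm_num) (by norm_num)
      calc Real.exp ((1:ℝ)/51) ≤ 1/(1 - 1/51) := hb
        _ = 51/50 := by norm_num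
    have h5251 : Real.exp ((52:ℝ)/51) ≤ Real.exp 1 * (51/50) := by
      rw [show (52:ℝ)/51 = 1 + 1/51 by norm_num, Real.exp_add]
      exact mul_le_mul_of_nonneg_left h151 he1.le
    have hc0A : c0 ≤ A * Real.exp (-(52/51)) := by
      rw [hc0_def, hA_def, hL_def, Real.exp_neg, div_le_iff₀ (by positivity)]
      have hda : Real.exp ((52:ℝ)/51) * (k:ℝ) ≤ Real.exp 1 * (51/50) * (8*t) := by
        apply mul_le_mul h5251 hkle (by positivity) (by positivity)
      have hrk : (0:ℝ) < Real.exp ((52:ℝ)/51) := Real.exp_pos _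
      rw [← sub_nonneg]
      have h0 : 24 * t * (Real.exp (52/51 : ℝ))⁻¹ * (Real.exp 1 * 0.34) - (k:ℝ)
          = ((24 * t * (Real.exp 1 * 0.34)) - Real.exp ((52:ℝ)/51) * (k:ℝ))
            / Real.exp ((52:ℝ)/51) := by
        field_simp
      rw [h0]
      apply div_nonneg _ hrk.le
      nlinarith [hda]
    have hc0Ak : c0^k ≤ A^k * Real.exp (-(52/51) * k) := by
      calc c0^k ≤ (A * Real.exp (-(52/51)))^k := pow_le_pow_left₀ hc00 hc0A k
        _ = A^k * Real.exp (-(52/51) * k) := by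
          rw [mul_pow, ← Real.exp_nat_mul]
          ring_nf
    have hkey : 2 * Real.exp (-(52/51) * k) * Real.exp (48 * t * 0.065)
        ≤ Real.exp (-(3*t)) := by
      rw [show (2:ℝ) * Real.exp (-(52/51) * k) * Real.exp (48 * t * 0.065)
          = 2 * Real.exp (-(52/51) * k + 48 * t * 0.065) by rw [Real.exp_add]; ring]
      rw [show Real.exp (-(3*t)) =
          Real.exp (-(52/51) * k + 48 * t * 0.065) *
            Real.exp ((52/51) * k - 48 * t * 0.065 - 3*t) by
        rw [← Real.exp_add]; ring_nf]
      rw [mul_comm (2:ℝ) _]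
      apply mul_le_mul_of_nonneg_left _ (Real.exp_pos _).le
      have hlog2 : (2:ℝ) = Real.exp (Real.log 2) := (Real.exp_log (by norm_num)).symm
      rw [hlog2]
      apply Real.exp_le_exp.2
      have hl2u : Real.log 2 < 0.6931471808 := Real.log_two_lt_d9
      rcases eq_or_lt_of_le hn with h3 | h4
      · -- n = 3
        have ht3 : t ≤ 1.1036384 := by
          have h3e : Real.log 3 ≤ 3 / Real.exp 1 := by
            have hpos : (0:ℝ) < 3 / Real.exp 1 := by positivity
            have hls := Real.log_le_sub_one_of_pos hpos
            rw [Real.log_div (by norm_num) (Real.exp_ne_zero 1), Real.log_exp] at hls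
            linarith
          have h3d : 3 / Real.exp 1 ≤ 1.1036384 := by
            rw [div_le_iff₀ he1]
            nlinarith [Real.exp_one_gt_d9]
          have : t = Real.log 3 := by rw [ht_def, ← h3]; norm_num
          linarith
        have hk8' : (8:ℝ) ≤ k := by exact_mod_cast hk8
        nlinarith
      · -- 4 ≤ n
        have h4n : (4:ℝ) ≤ n := by
          have : (4:ℕ) ≤ n := h4
          exact_mod_cast this
        have ht4 : 2 * Real.log 2 ≤ t := by
          have hl : Real.log 4 ≤ t := by
            rw [ht_def]
            exact Real.log_le_log (by norm_num) h4n
          have h42 : Real.log 4 = 2 * Real.log 2 := by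
            rw [show (4:ℝ) = 2^2 by norm_num, Real.log_pow]
            push_cast; ring
          linarith
        have hl2l : (0.6931471803:ℝ) < Real.log 2 := Real.log_two_gt_d9
        nlinarith [hkgt]
    calc 2 * c0 ^ k * Real.exp (48 * t * 0.065)
        ≤ 2 * (A^k * Real.exp (-(52/51) * k)) * Real.exp (48 * t * 0.065) := by
          have h2 : (0:ℝ) ≤ Real.exp (48 * t * 0.065) := (Real.exp_pos _).le
          nlinarith [hc0Ak, pow_nonneg hA0.le k]
      _ = A^k * (2 * Real.exp (-(52/51) * k) * Real.exp (48 * t * 0.065)) := by ring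
      _ ≤ A^k * Real.exp (-(3*t)) :=
          mul_le_mul_of_nonneg_left hkey (pow_nonneg hA0.le k)
      _ = A^k * ((n:ℝ)^3)⁻¹ := by rw [hn3inv]
  have hchain : (ℙ {ω | 72 * Real.log n ≤ ∑ w, X w ω}).toReal * A^k
      ≤ A^k * ((n:ℝ)^3)⁻¹ := by
    calc (ℙ {ω | 72 * Real.log n ≤ ∑ w, X w ω}).toReal * A^k
        ≤ ∫ ω, (∑ w, Y w ω)^k := hMarkov
      _ = ∑ f ∈ F, ∏ w : S, ν (d f w) := hexp
      _ = ∑ g ∈ G, (∏ w : S, B (g w)) * (∑ w : S, V (g w))^k := hmodel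
      _ ≤ 2 * c0 ^ k * Real.exp (48 * t * 0.065) := hMbound
      _ ≤ A^k * ((n:ℝ)^3)⁻¹ := hfinal
  have hAk0 : 0 < A ^ k := by positivity
  have htoReal : (ℙ {ω | 72 * Real.log n ≤ ∑ w, X w ω}).toReal ≤ ((n:ℝ)^3)⁻¹ := by
    have := (mul_le_mul_iff_of_pos_right hAk0).1 (by linarith [hchain] : 
      (ℙ {ω | 72 * Real.log n ≤ ∑ w, X w ω}).toReal * A^k ≤ ((n:ℝ)^3)⁻¹ * A^k)
    exact this
  calc ℙ {ω | 72 * Real.log n ≤ ∑ w, X w ω}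
      = ENNReal.ofReal (ℙ {ω | 72 * Real.log n ≤ ∑ w, X w ω}).toReal :=
        (ENNReal.ofReal_toReal (measure_ne_top _ _)).symm
    _ ≤ ENNReal.ofReal ((n:ℝ)^3)⁻¹ := ENNReal.ofReal_le_ofReal htoReal
    _ = ((n : ℝ≥0∞) ^ 3)⁻¹ := by
        rw [ENNReal.ofReal_inv_of_pos (by positivity), ENNReal.ofReal_pow hn0.le,
          ENNReal.ofReal_natCast]
end

section
/- Let G be a finite simple graph with vertex set V, let B ⊆ V, let R be a finite index set, and let {Ball(v)}_{v∈R} be a partition of B into nonempty sets. Then there exist sets Ball⁺(v) for v ∈ R such that: Ball(v) ⊆ Ball⁺(v) for all v ∈ R; Ball⁺(v) ∖ Ball(v) ⊆ V ∖ B for all v ∈ R; the sets Ball⁺(v) are pairwise disjoint; and, letting 𝓑 be the graph on vertex set R in which distinct v and w are adjacent whenever dist_G(Ball⁺(v), Ball⁺(w)) ≤ 1, every pair of distinct v, w ∈ R satisfies dist_𝓑(v, w) ≤ dist_G(Ball(v), Ball(w)). -/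
open scoped ENNReal

/-- **Forming a distance-`k` ball graph.** Given a partition `{Ball(v)}_{v∈R}` of `B ⊆ V`
into nonempty sets, there exist enlarged pairwise-disjoint sets `Ball⁺(v) ⊇ Ball(v)` adding
only vertices outside `B`, such that in the ball graph `𝓑` on `R` (distinct `v, w` adjacent
iff `dist_G(Ball⁺(v), Ball⁺(w)) ≤ 1`), any distinct `v, w` satisfy
`dist_𝓑(v, w) ≤ dist_G(Ball(v), Ball(w))`. -/
theorem distance_ball_graph {V ι : Type*} [Fintype V] [Fintype ι]
    (G : SimpleGraph V) (B : Set V) (Ball : ι → Set V)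
    (hne : ∀ v : ι, (Ball v).Nonempty)
    (hdisj : Pairwise (fun v w : ι => Disjoint (Ball v) (Ball w)))
    (hcover : (⋃ v : ι, Ball v) = B) :
    ∃ BallP : ι → Set V,
      (∀ v : ι, Ball v ⊆ BallP v) ∧
      (∀ v : ι, BallP v \ Ball v ⊆ Bᶜ) ∧
      Pairwise (fun v w : ι => Disjoint (BallP v) (BallP w)) ∧
      ∀ 𝓑 : SimpleGraph ι,
        (∀ v w : ι, 𝓑.Adj v w ↔ v ≠ w ∧ sdist G (BallP v) (BallP w) ≤ (1 : ℕ∞)) →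
        ∀ v w : ι, v ≠ w → 𝓑.edist v w ≤ sdist G (Ball v) (Ball w) := by
  classical
  rcases isEmpty_or_nonempty ι with hι | hι
  · exact ⟨Ball, fun v => le_refl _, fun v => (hι.elim v), fun v w h => (hι.elim v),
      fun 𝓑 h v w hvw => (hι.elim v)⟩
  have hB : ∀ x, x ∈ B → ∃ v, x ∈ Ball v := by
    intro x hx
    rw [← hcover] at hx
    exact Set.mem_iUnion.mp hx
  choose g hg using hB
  set f : V → ι := fun x => if h : x ∈ B then g x h else Classical.arbitrary ι with hf_def
  have hf : ∀ v x, x ∈ Ball v → f x = v := by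
    intro v x hx
    have hxB : x ∈ B := hcover ▸ Set.mem_iUnion.mpr ⟨v, hx⟩
    simp only [hf_def, dif_pos hxB]
    by_contra hne'
    exact Set.disjoint_left.mp (hdisj hne') (hg x hxB) hx
  refine ⟨fun v => f ⁻¹' {v}, fun v x hx => hf v x hx, ?_, ?_, ?_⟩
  · intro v x hx hxB
    rcases hx with ⟨hfx, hxb⟩
    apply hxb
    have : f x = g x hxB := by simp only [hf_def, dif_pos hxB]
    have := hg x hxB
    rw [← ‹f x = g x hxB›, hfx] at this
    exact this
  · intro v w hvw
    rw [Set.disjoint_left]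
    intro x hx hx'
    exact hvw (hx.symm.trans hx')
  · intro 𝓑 h𝓑 v w hvw
    -- key: for any walk, 𝓑-distance between assigned indices is at most its length
    have key : ∀ a b : V, ∀ p : G.Walk a b, 𝓑.edist (f a) (f b) ≤ (p.length : ℕ∞) := by
      intro a b p
      induction p with
      | nil => simp [SimpleGraph.edist_self]
      | @cons a c b hadj p ih =>
        have h1 : 𝓑.edist (f a) (f c) ≤ 1 := by
          by_cases he : f a = f c
          · rw [he, SimpleGraph.edist_self]; exact zero_le
          · have hs : sdist G (f ⁻¹' {f a}) (f ⁻¹' {f c}) ≤ (1 : ℕ∞) := by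
              have h2 : G.edist a c ≤ 1 := by
                rw [SimpleGraph.edist_eq_one_iff_adj.mpr hadj]
              refine le_trans ?_ h2
              exact iInf₂_le_of_le a rfl (iInf₂_le_of_le c rfl le_rfl)
            have adj : 𝓑.Adj (f a) (f c) := (h𝓑 _ _).mpr ⟨he, hs⟩
            rw [SimpleGraph.edist_eq_one_iff_adj.mpr adj]
        calc 𝓑.edist (f a) (f b) ≤ 𝓑.edist (f a) (f c) + 𝓑.edist (f c) (f b) :=
              SimpleGraph.edist_triangle
          _ ≤ 1 + (p.length : ℕ∞) := add_le_add h1 ih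
          _ = ((p.length + 1 : ℕ) : ℕ∞) := by push_cast; ring
    refine le_iInf₂ fun a ha => le_iInf₂ fun b hb => ?_
    by_cases htop : G.edist a b = ⊤
    · rw [htop]; exact le_top
    · obtain ⟨p, hp⟩ := SimpleGraph.exists_walk_of_edist_ne_top htop
      have := key a b p
      rw [hp, hf v a ha, hf w b hb] at this
      exact this
end

section
/- For all positive integers a, b, k there exists a nonempty finite family 𝓗 of functions from {0,1}^a to {0,1}^b with |𝓗| ≤ 2^{k·max(a,b)} that is k-wise independent: for every choice of k distinct inputs x₁, …, x_k ∈ {0,1}^a, if h is chosen uniformly at random from 𝓗, then the random values h(x₁), …, h(x_k) are mutually independent and each is uniformly distributed on {0,1}^b. -/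
open Finset

/-- Counting via constant fibers: if all fibers of `f` (over points in the range)
have the same size `m`, then filtered image counts scale by `m`. -/
lemma aux_fiber_count {G H : Type*} [Fintype G] [DecidableEq H] (f : G → H)
    (P : H → Prop) [DecidablePred P] (m : ℕ)
    (hf : ∀ g : G, (univ.filter (fun g' => f g' = f g)).card = m) :
    ((Finset.image f univ).filter P).card * m
      = (univ.filter (fun g => P (f g))).card := by
  classical
  have hdecomp : univ.filter (fun g => P (f g)) =
      ((Finset.image f univ).filter P).biUnion
        (fun h => univ.filter (fun g => f g = h)) := by
    ext g
    simp only [mem_biUnion, mem_filter, mem_univ, true_and, Finset.mem_image]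
    constructor
    · intro hP
      exact ⟨f g, ⟨⟨g, rfl⟩, hP⟩, rfl⟩
    · rintro ⟨h, ⟨-, hP⟩, rfl⟩
      exact hP
  rw [hdecomp, Finset.card_biUnion]
  · rw [Finset.sum_congr rfl (fun h hh => ?_), Finset.sum_const, smul_eq_mul, mul_comm]
    obtain ⟨hmem, -⟩ := mem_filter.mp hh
    obtain ⟨g, -, rfl⟩ := Finset.mem_image.mp hmem
    exact hf g
  · intro h1 _ h2 _ hne
    rw [Function.onFun, Finset.disjoint_left]
    intro g hg1 hg2
    exact hne ((mem_filter.mp hg1).2 ▸ (mem_filter.mp hg2).2 ▸ rfl)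

/-- Additive maps have constant fiber sizes over points of their range. -/
lemma aux_addhom_fiber {G H : Type*} [AddCommGroup G] [AddCommGroup H]
    [Fintype G] [DecidableEq H] (f : G →+ H) (g g₀ : G) :
    (univ.filter (fun g' => f g' = f g)).card
      = (univ.filter (fun g' => f g' = f g₀)).card := by
  classical
  refine Finset.card_bij' (fun g' _ => g' - g + g₀) (fun g' _ => g' - g₀ + g)
    ?_ ?_ ?_ ?_
  · intro g' hg'
    have := (mem_filter.mp hg').2
    simp [map_add, map_sub, this]
  · intro g' hg'
    have := (mem_filter.mp hg').2
    simp [map_add, map_sub, this]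
  · intro g' _
    show g' - g + g₀ - g₀ + g = g'
    abel
  · intro g' _
    show g' - g₀ + g - g + g₀ = g'
    abel

/-- Fibers of a surjective additive map between finite groups. -/
lemma aux_surj_fiber {G H : Type*} [AddCommGroup G] [AddCommGroup H]
    [Fintype G] [Fintype H] [DecidableEq H] (f : G →+ H)
    (hf : Function.Surjective f) (h : H) :
    (univ.filter (fun g => f g = h)).card * Fintype.card H = Fintype.card G := by
  classical
  obtain ⟨g₀, rfl⟩ := hf h
  have hconst : ∀ g : G, (univ.filter (fun g' => f g' = f g)).card
      = (univ.filter (fun g' => f g' = f g₀)).card :=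
    fun g => aux_addhom_fiber f g g₀
  have himg : Finset.image f univ = univ := by
    apply Finset.eq_univ_of_forall
    intro h'
    obtain ⟨g, rfl⟩ := hf h'
    exact Finset.mem_image_of_mem f (mem_univ g)
  have := aux_fiber_count f (fun _ => True) _ hconst
  simp only [himg, Finset.filter_true, Finset.card_univ] at this
  rw [mul_comm] at this
  rw [this]

/-- **Existence of small `k`-wise independent hash families** (Corollary 3.34 in
Vadhan's "Pseudorandomness"). For all positive `a, b, k` there is a nonempty family `𝓗`
of functions `{0,1}^a → {0,1}^b` with `|𝓗| ≤ 2^(k·max(a,b))` that is `k`-wise independent: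
for any `k` distinct inputs `x₁, …, x_k` and any outputs `y₁, …, y_k`, the fraction of
`h ∈ 𝓗` with `h(xᵢ) = yᵢ` for all `i` is exactly `(2^b)^(-k)`; equivalently, for `h`
uniform on `𝓗` the values `h(x₁), …, h(x_k)` are mutually independent and each uniform
on `{0,1}^b`. -/
theorem exists_kwise_independent_hash_family (a b k : ℕ)
    (ha : 0 < a) (hb : 0 < b) (hk : 0 < k) :
    ∃ 𝓗 : Finset ((Fin a → Bool) → (Fin b → Bool)),
      𝓗.Nonempty ∧
      𝓗.card ≤ 2 ^ (k * max a b) ∧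
      ∀ x : Fin k → (Fin a → Bool), Function.Injective x →
        ∀ y : Fin k → (Fin b → Bool),
          (𝓗.filter (fun h => ∀ i : Fin k, h (x i) = y i)).card * (2 ^ b) ^ k
            = 𝓗.card := by
  classical
  set n := max a b with hn
  have hn0 : 0 < n := lt_of_lt_of_le ha (le_max_left a b)
  have han : a ≤ n := le_max_left a b
  have hbn : b ≤ n := le_max_right a b
  set F := GaloisField 2 n with hF
  haveI : Fintype F := Fintype.ofFinite F
  have hcardF : Fintype.card F = 2 ^ n := by
    rw [← Nat.card_eq_fintype_card]; exact GaloisField.card 2 n hn0.ne'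
  -- basis of F over ZMod 2
  have hrank : Module.finrank (ZMod 2) F = n := by
    have := Module.card_fintype (Module.finBasis (ZMod 2) F)
    rw [hcardF, ZMod.card, Fintype.card_fin] at this
    exact (Nat.pow_right_injective le_rfl this.symm)
  let bas : Module.Basis (Fin n) (ZMod 2) F := (Module.finBasis (ZMod 2) F).reindex (finCongr hrank)
  let e : F ≃ₗ[ZMod 2] (Fin n → ZMod 2) := bas.equivFun
  -- Bool ↔ ZMod 2
  let β : Bool → ZMod 2 := fun v => if v then 1 else 0
  have hβinj : Function.Injective β := by decide
  let γ : ZMod 2 → Bool := fun z => decide (z = 1)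
  have hγβ : ∀ v, γ (β v) = v := by decide
  have hβγ : ∀ z, β (γ z) = z := by decide
  have hγinj : Function.Injective γ := fun z w h => by rw [← hβγ z, ← hβγ w, h]
  -- embedding of inputs
  let embed : (Fin a → Bool) → F := fun x =>
    e.symm (fun i => if h : (i : ℕ) < a then β (x ⟨i, h⟩) else 0)
  have hembed : Function.Injective embed := by
    intro x x' hxx
    funext j
    have h1 := congrFun (e.symm.injective hxx) (Fin.castLE han j)
    simp only [Fin.coe_castLE, j.isLt, dif_pos] at h1
    exact hβinj h1
  -- the additive index group and evaluation map
  let Φ : (Fin k → F) →+ ((Fin a → Bool) → (Fin b → ZMod 2)) :=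
    { toFun := fun c x j => e (∑ i : Fin k, c i * (embed x) ^ (i : ℕ)) (Fin.castLE hbn j)
      map_zero' := by
        funext x j; simp
      map_add' := by
        intro c c'
        funext x j
        simp [add_mul, Finset.sum_add_distrib, map_add] }
  let Hf : (Fin k → F) → ((Fin a → Bool) → (Fin b → Bool)) :=
    fun c x j => γ (Φ c x j)
  have hHfΦ : ∀ c c', Hf c = Hf c' ↔ Φ c = Φ c' := by
    intro c c'
    constructor
    · intro h
      funext x j
      exact hγinj (congrFun (congrFun h x) j)
    · intro h
      funext x j
      exact congrArg γ (congrFun (congrFun h x) j)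
  refine ⟨Finset.image Hf univ, ⟨Hf 0, Finset.mem_image_of_mem _ (mem_univ 0)⟩, ?_, ?_⟩
  · calc (Finset.image Hf univ).card ≤ Fintype.card (Fin k → F) :=
          le_trans (Finset.card_image_le) (le_of_eq (Finset.card_univ))
      _ = 2 ^ (k * n) := by
          rw [Fintype.card_fun, hcardF, Fintype.card_fin, ← pow_mul, mul_comm]
  · intro x hx y
    -- distinct field points
    set X : Fin k → F := fun i => embed (x i) with hX
    have hXinj : Function.Injective X := hembed.comp hx
    -- the evaluation-at-nodes map
    let Ψ : (Fin k → F) →+ (Fin k → Fin b → ZMod 2) :=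
      { toFun := fun c i j => e (∑ l : Fin k, c l * (X i) ^ (l : ℕ)) (Fin.castLE hbn j)
        map_zero' := by funext i j; simp
        map_add' := by
          intro c c'
          funext i j
          simp [add_mul, Finset.sum_add_distrib, map_add] }
    have hΨΦ : ∀ c i, Ψ c i = Φ c (x i) := by intro c i; rfl
    -- surjectivity of Ψ via Lagrange interpolation
    have hΨsurj : Function.Surjective Ψ := by
      intro t
      -- lift each row of t to an element of F
      let T : Fin k → F := fun i =>
        e.symm (fun m => if h : (m : ℕ) < b then t i ⟨m, h⟩ else 0)
      have hT : ∀ i j, e (T i) (Fin.castLE hbn j) = t i j := by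
        intro i j
        simp only [T, LinearEquiv.apply_symm_apply, Fin.coe_castLE, j.isLt, dif_pos]
      -- interpolate
      have hinj : Set.InjOn X (Finset.univ : Finset (Fin k)) := fun i _ j _ h => hXinj h
      set p := Lagrange.interpolate Finset.univ X T with hp
      have hdeg : p.natDegree < k := by
        rcases eq_or_ne p 0 with h0 | h0
        · rw [h0]; simpa using hk
        · have := Lagrange.degree_interpolate_lt T hinj
          rw [Finset.card_univ, Fintype.card_fin] at this
          exact (Polynomial.natDegree_lt_iff_degree_lt h0).mpr this
      refine ⟨fun l => p.coeff l, ?_⟩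
      funext i j
      have heval : (∑ l : Fin k, p.coeff l * (X i) ^ (l : ℕ)) = p.eval (X i) := by
        rw [Polynomial.eval_eq_sum_range' hdeg]
        exact Fin.sum_univ_eq_sum_range (fun m => p.coeff m * (X i) ^ m) k
      show e (∑ l : Fin k, p.coeff l * (X i) ^ (l : ℕ)) (Fin.castLE hbn j) = t i j
      rw [heval, Lagrange.eval_interpolate_at_node T hinj (mem_univ i), hT]
    -- translate the predicate on hash functions to a Ψ-fiber
    set y' : Fin k → Fin b → ZMod 2 := fun i j => β (y i j) with hy'
    have hpred : ∀ c, (∀ i : Fin k, Hf c (x i) = y i) ↔ Ψ c = y' := by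
      intro c
      constructor
      · intro h
        funext i j
        have := congrFun (h i) j
        show Φ c (x i) j = β (y i j)
        rw [← this]
        exact (hβγ _).symm
      · intro h i
        funext j
        have := congrFun (congrFun h i) j
        rw [hΨΦ] at this
        show γ (Φ c (x i) j) = y i j
        rw [this, hy', hγβ]
    -- fiber sizes of Hf are constant
    set m : ℕ := (univ.filter (fun c' => Hf c' = Hf 0)).card with hm
    have hconst : ∀ c, (univ.filter (fun c' => Hf c' = Hf c)).card = m := by
      intro c
      have h1 : (univ.filter (fun c' => Hf c' = Hf c))
          = (univ.filter (fun c' => Φ c' = Φ c)) := by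
        apply Finset.filter_congr
        intro c' _
        simp [hHfΦ]
      have h2 : (univ.filter (fun c' => Hf c' = Hf 0))
          = (univ.filter (fun c' => Φ c' = Φ 0)) := by
        apply Finset.filter_congr
        intro c' _
        simp [hHfΦ]
      rw [hm, h1, h2]
      exact aux_addhom_fiber Φ c 0
    have hm0 : 0 < m := by
      rw [← hconst 0]
      exact Finset.card_pos.mpr ⟨0, mem_filter.mpr ⟨mem_univ 0, rfl⟩⟩
    -- the two counting identities
    have hA := aux_fiber_count Hf (fun h => ∀ i : Fin k, h (x i) = y i) m hconst
    have hB := aux_fiber_count Hf (fun _ => True) m hconst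
    simp only [Finset.filter_true, Finset.card_univ] at hB
    have hC := aux_surj_fiber Ψ hΨsurj y'
    have hcardT : Fintype.card (Fin k → Fin b → ZMod 2) = (2 ^ b) ^ k := by
      simp [Fintype.card_fun, ZMod.card]
    have hcardG : Fintype.card (Fin k → F) = 2 ^ (k * n) := by
      rw [Fintype.card_fun, hcardF, Fintype.card_fin, ← pow_mul, mul_comm]
    rw [hcardT, hcardG] at hC
    -- the filters over c agree
    have hfilt : (univ.filter (fun c => ∀ i : Fin k, Hf c (x i) = y i))
        = (univ.filter (fun c => Ψ c = y')) := by
      apply Finset.filter_congr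
      intro c _
      simp [hpred c]
    rw [hfilt] at hA
    -- conclude
    apply Nat.eq_of_mul_eq_mul_right hm0
    calc ((Finset.image Hf univ).filter
            (fun h => ∀ i : Fin k, h (x i) = y i)).card * (2 ^ b) ^ k * m
        = ((Finset.image Hf univ).filter
            (fun h => ∀ i : Fin k, h (x i) = y i)).card * m * (2 ^ b) ^ k := by ring
      _ = (univ.filter (fun c => Ψ c = y')).card * (2 ^ b) ^ k := by rw [hA]
      _ = 2 ^ (k * n) := hC
      _ = (Finset.image Hf univ).card * m := by
          rw [← hcardG]
          exact hB.symm
end
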